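/- arXiv:1604.01472 — 5 statements merged into one kernel-verified Lean document; each statement's English description precedes it below -/
import Mathlib

section
/- Let μ be a finite Borel measure on ℝ that is equivalent to Lebesgue measure on an interval containing the support of a probability measure m. Then the map ν ↦ (x ↦ ν(−∞, x]) is continuous from the set {ν ∈ M₁(ℝ) : supp(ν) ⊆ supp(m)} (with the weak* topology) into L²(μ). -/
open MeasureTheory Filter Topology ENNReal NNReal

def measureSupport (ν : Measure ℝ) : Set ℝ :=
  {x | ∀ U : Set ℝ, IsOpen U → x ∈ U → ν U ≠ 0}

/-- Let `μ` be a finite Borel measure on `ℝ` equivalent to Lebesgue measure on an interval `I`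
containing the support of a probability measure `m`. Then the map `ν ↦ (x ↦ ν(−∞, x])` is
continuous from `{ν ∈ M₁(ℝ) : supp ν ⊆ supp m}` (weak* topology) into `L²(μ)`. -/
theorem stmt4
    (μ : Measure ℝ) [IsFiniteMeasure μ]
    (m : ProbabilityMeasure ℝ)
    (I : Set ℝ) (hI : I.OrdConnected)
    (hsupp : measureSupport (m : Measure ℝ) ⊆ I)
    (hac : μ ≪ volume.restrict I) (hac' : volume.restrict I ≪ μ)
    (T : ProbabilityMeasure ℝ → Lp ℝ 2 μ)
    (hT : ∀ ν : ProbabilityMeasure ℝ,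
      (T ν : ℝ → ℝ) =ᵐ[μ] fun x => ((ν : Measure ℝ) (Set.Iic x)).toReal) :
    ContinuousOn T {ν : ProbabilityMeasure ℝ |
      measureSupport (ν : Measure ℝ) ⊆ measureSupport (m : Measure ℝ)} := by
  have hvol : μ ≪ (volume : Measure ℝ) :=
    hac.trans Measure.restrict_le_self.absolutelyContinuous
  have hFact : Fact ((1 : ℝ≥0∞) ≤ 2) := ⟨one_le_two⟩
  apply Continuous.continuousOn
  rw [continuous_iff_seqContinuous]
  intro νs ν hlim
  show Tendsto (fun n => T (νs n)) atTop (𝓝 (T ν))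
  rw [Lp.tendsto_Lp_iff_tendsto_eLpNorm']
  -- the CDFs
  set F : ℕ → ℝ → ℝ := fun n x => ((νs n : Measure ℝ) (Set.Iic x)).toReal with hF
  set G : ℝ → ℝ := fun x => ((ν : Measure ℝ) (Set.Iic x)).toReal with hG
  have hmono : ∀ ρ : ProbabilityMeasure ℝ,
      Monotone (fun x => ((ρ : Measure ℝ) (Set.Iic x)).toReal) := by
    intro ρ x y hxy
    exact ENNReal.toReal_mono (measure_ne_top _ _)
      (measure_mono (Set.Iic_subset_Iic.mpr hxy))
  have hmeas : ∀ ρ : ProbabilityMeasure ℝ,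
      AEStronglyMeasurable (fun x => ((ρ : Measure ℝ) (Set.Iic x)).toReal) μ :=
    fun ρ => ((hmono ρ).measurable).aestronglyMeasurable
  have hbdd : ∀ (ρ : ProbabilityMeasure ℝ) (x : ℝ),
      ‖((ρ : Measure ℝ) (Set.Iic x)).toReal‖ ≤ 1 := by
    intro ρ x
    rw [Real.norm_eq_abs, abs_of_nonneg ENNReal.toReal_nonneg]
    have : ((ρ : Measure ℝ) (Set.Iic x)) ≤ 1 := prob_le_one
    calc ((ρ : Measure ℝ) (Set.Iic x)).toReal ≤ (1 : ℝ≥0∞).toReal :=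
          ENNReal.toReal_mono one_ne_top this
      _ = 1 := ENNReal.toReal_one
  -- a.e. convergence of the CDFs
  have hae : ∀ᵐ x ∂μ, Tendsto (fun n => F n x) atTop (𝓝 (G x)) := by
    have hcnt : Set.Countable {x : ℝ | 0 < (ν : Measure ℝ) {a : ℝ | id a = x}} :=
      Measure.countable_meas_level_set_pos measurable_id
    have hnull : μ {x : ℝ | 0 < (ν : Measure ℝ) {a : ℝ | id a = x}} = 0 :=
      hvol (Set.Countable.measure_zero hcnt _)
    have : ∀ᵐ x ∂μ, (ν : Measure ℝ) {x} = 0 := by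
      rw [ae_iff]
      refine measure_mono_null (fun x hx => ?_) hnull
      simpa [Set.setOf_eq_eq_singleton, pos_iff_ne_zero] using hx
    filter_upwards [this] with x hxz
    have hfr : (ν : Measure ℝ) (frontier (Set.Iic x)) = 0 := by
      rwa [frontier_Iic]
    have key := ProbabilityMeasure.tendsto_measure_of_null_frontier_of_tendsto' hlim hfr
    exact (ENNReal.tendsto_toReal (measure_ne_top _ _)).comp key
  -- uniform integrability (uniform bound by 1)
  have hui : UnifIntegrable F 2 μ := by
    refine unifIntegrable_of one_le_two ENNReal.ofNat_ne_top (fun n => hmeas (νs n)) ?_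
    intro ε hε
    refine ⟨2, fun i => ?_⟩
    have hempty : {x : ℝ | (2 : ℝ≥0) ≤ ‖F i x‖₊} = ∅ := by
      ext x
      simp only [Set.mem_setOf_eq, Set.mem_empty_iff_false, iff_false, not_le]
      have : (‖F i x‖₊ : ℝ) ≤ 1 := hbdd (νs i) x
      have h2 : (‖F i x‖₊ : ℝ) < 2 := lt_of_le_of_lt this one_lt_two
      exact_mod_cast h2
    rw [hempty]
    simp [eLpNorm_zero, Set.indicator_empty]
  -- Lp convergence
  have key : Tendsto (fun n => eLpNorm (F n - G) 2 μ) atTop (𝓝 0) := by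
    refine tendsto_Lp_finite_of_tendsto_ae one_le_two ENNReal.ofNat_ne_top
      (fun n => hmeas (νs n)) ?_ hui hae
    exact MemLp.of_bound (hmeas ν) 1 (Filter.Eventually.of_forall (hbdd ν))
  refine key.congr' ?_
  filter_upwards with n
  refine eLpNorm_congr_ae ?_
  filter_upwards [hT (νs n), hT ν] with x h1 h2
  simp [Pi.sub_apply, h1, h2, hF, hG]
end

section
/- Let ξ be a random element of M₁(ℝ) with baricenter 𝔼ξ, and μ a finite Borel measure absolutely continuous with respect to Lebesgue measure on an interval containing supp(𝔼ξ). Define F(x) := ξ(−∞, x]. Then F is a bounded, strongly measurable random element in L²(μ), and its Bochner expectation is the map x ↦ (𝔼ξ)(−∞, x]. -/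
open MeasureTheory Filter Topology
open scoped ENNReal NNReal

private lemma aux_cdf_tendsto {ν : ProbabilityMeasure ℝ} {x : ℝ}
    (hx : (ν : Measure ℝ) {x} = 0) :
    Tendsto (fun ν' : ProbabilityMeasure ℝ => ((ν' : Measure ℝ) (Set.Iic x)).toReal) (𝓝 ν)
      (𝓝 (((ν : Measure ℝ) (Set.Iic x)).toReal)) := by
  have key := ProbabilityMeasure.tendsto_measure_of_null_frontier_of_tendsto'
      (tendsto_id : Tendsto id (𝓝 ν) (𝓝 ν)) (E := Set.Iic x) (by rwa [frontier_Iic])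
  exact (ENNReal.tendsto_toReal (measure_ne_top _ _)).comp key

private lemma aux_atoms_null {μ : Measure ℝ} (hμv : μ ≪ volume)
    (ν : ProbabilityMeasure ℝ) : μ {x : ℝ | (ν : Measure ℝ) {x} ≠ 0} = 0 := by
  have hcnt : Set.Countable {x : ℝ | 0 < (ν : Measure ℝ) {x}} := by
    apply Measure.countable_meas_pos_of_disjoint_iUnion
      (As := fun x : ℝ => ({x} : Set ℝ)) (fun x => measurableSet_singleton x)
    exact fun i j hij => Set.disjoint_singleton.mpr hij
  have : {x : ℝ | (ν : Measure ℝ) {x} ≠ 0} = {x : ℝ | 0 < (ν : Measure ℝ) {x}} := by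
    ext x; simp [pos_iff_ne_zero]
  rw [this]
  exact hμv (hcnt.measure_zero volume)

private lemma aux_T_cont {μ : Measure ℝ} [IsFiniteMeasure μ] (hμv : μ ≪ volume)
    (T : ProbabilityMeasure ℝ → Lp ℝ 2 μ)
    (hT : ∀ ν : ProbabilityMeasure ℝ,
      (T ν : ℝ → ℝ) =ᵐ[μ] fun x => ((ν : Measure ℝ) (Set.Iic x)).toReal) :
    Continuous T := by
  have cdf_meas : ∀ ν : ProbabilityMeasure ℝ,
      Measurable fun x : ℝ => ((ν : Measure ℝ) (Set.Iic x)).toReal := by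
    intro ν
    refine Monotone.measurable fun a b hab => ?_
    exact ENNReal.toReal_mono (measure_ne_top _ _) (measure_mono (Set.Iic_subset_Iic.mpr hab))
  have cdf01 : ∀ (ν : ProbabilityMeasure ℝ) (x : ℝ),
      ((ν : Measure ℝ) (Set.Iic x)).toReal ∈ Set.Icc (0:ℝ) 1 := by
    intro ν x
    constructor
    · exact ENNReal.toReal_nonneg
    · have := prob_le_one (μ := (ν : Measure ℝ)) (s := Set.Iic x)
      simpa using ENNReal.toReal_mono ENNReal.one_ne_top this
  rw [continuous_iff_continuousAt]
  intro ν
  have key : Tendsto (fun ν' : ProbabilityMeasure ℝ => eLpNorm (⇑(T ν') - ⇑(T ν)) 2 μ)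
      (𝓝 ν) (𝓝 0) := by
    have heq : ∀ ν' : ProbabilityMeasure ℝ, eLpNorm (⇑(T ν') - ⇑(T ν)) 2 μ =
        (∫⁻ x, (‖((ν' : Measure ℝ) (Set.Iic x)).toReal
          - ((ν : Measure ℝ) (Set.Iic x)).toReal‖₊ : ℝ≥0∞) ^ (2:ℝ) ∂μ) ^ (1/2 : ℝ) := by
      intro ν'
      have : (⇑(T ν') - ⇑(T ν)) =ᵐ[μ] fun x => ((ν' : Measure ℝ) (Set.Iic x)).toReal
          - ((ν : Measure ℝ) (Set.Iic x)).toReal := by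
        filter_upwards [hT ν', hT ν] with x h1 h2
        simp [h1, h2]
      rw [eLpNorm_congr_ae this, eLpNorm_eq_lintegral_rpow_enorm_toReal two_ne_zero ENNReal.ofNat_ne_top]
      norm_num [enorm_eq_nnnorm]
    simp_rw [heq]
    have hlim : Tendsto (fun ν' : ProbabilityMeasure ℝ =>
        ∫⁻ x, (‖((ν' : Measure ℝ) (Set.Iic x)).toReal
          - ((ν : Measure ℝ) (Set.Iic x)).toReal‖₊ : ℝ≥0∞) ^ (2:ℝ) ∂μ) (𝓝 ν) (𝓝 0) := by
      have h0 : (0:ℝ≥0∞) = ∫⁻ _, (0:ℝ≥0∞) ∂μ := by simp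
      rw [h0]
      refine tendsto_lintegral_filter_of_dominated_convergence (fun _ => 1)
        (Eventually.of_forall fun ν' => ?_) (Eventually.of_forall fun ν' => ?_) (by simpa using measure_ne_top μ Set.univ) ?_
      · exact (((cdf_meas ν').sub (cdf_meas ν)).nnnorm.coe_nnreal_ennreal).pow_const _
      · refine ae_of_all _ fun x => ?_
        refine ENNReal.rpow_le_one ?_ (by norm_num)
        rw [ENNReal.coe_le_one_iff, ← NNReal.coe_le_coe, coe_nnnorm, Real.norm_eq_abs]
        have h1 := cdf01 ν' x
        have h2 := cdf01 ν x
        push_cast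
        rw [abs_le]
        constructor <;> nlinarith [h1.1, h1.2, h2.1, h2.2]
      · filter_upwards [(ae_iff.mpr (by simpa using aux_atoms_null hμv ν))] with x hx
        have hxx : (ν : Measure ℝ) {x} = 0 := by simpa using hx
        have h1 : Tendsto (fun ν' : ProbabilityMeasure ℝ =>
            ((ν' : Measure ℝ) (Set.Iic x)).toReal - ((ν : Measure ℝ) (Set.Iic x)).toReal)
            (𝓝 ν) (𝓝 0) := by
          simpa using (aux_cdf_tendsto hxx).sub_const (((ν : Measure ℝ) (Set.Iic x)).toReal)
        have hcont : Continuous fun r : ℝ => ((‖r‖₊ : ℝ≥0∞)) ^ (2:ℝ) :=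
          ENNReal.continuous_rpow_const.comp (ENNReal.continuous_coe.comp continuous_nnnorm)
        have := (hcont.tendsto (0:ℝ)).comp h1
        simpa [Function.comp_def] using this
    have hcont2 : Continuous fun z : ℝ≥0∞ => z ^ (1/2 : ℝ) := ENNReal.continuous_rpow_const
    have := (hcont2.tendsto 0).comp hlim
    simpa [ENNReal.zero_rpow_of_pos, Function.comp_def] using this
  exact (Lp.tendsto_Lp_iff_tendsto_eLpNorm' T (T ν)).mpr key

/-- Let `ξ` be a random element of `M₁(ℝ)` with baricenter `m`, and `μ` a finite measure
absolutely continuous w.r.t. Lebesgue measure on an interval containing `supp m`.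
Then `F(ω) := (x ↦ ξ(ω)(−∞,x])`, viewed in `L²(μ)`, is a bounded, strongly measurable random
element of `L²(μ)`, and its Bochner expectation is the map `x ↦ m(−∞,x]`. -/
theorem stmt5
    {Ω : Type*} [MeasurableSpace Ω] (P : Measure Ω) [IsProbabilityMeasure P]
    (ξ : Ω → ProbabilityMeasure ℝ)
    (hξ : Measurable[_, borel (ProbabilityMeasure ℝ)] ξ)
    (m : ProbabilityMeasure ℝ)
    (hbar : ∀ f : BoundedContinuousFunction ℝ ℝ,
      ∫ ω, (∫ x, f x ∂((ξ ω : Measure ℝ))) ∂P = ∫ x, f x ∂(m : Measure ℝ))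
    (μ : Measure ℝ) [IsFiniteMeasure μ]
    (I : Set ℝ) (hI : I.OrdConnected)
    (hsupp : measureSupport (m : Measure ℝ) ⊆ I)
    (hac : μ ≪ volume.restrict I)
    (T : ProbabilityMeasure ℝ → Lp ℝ 2 μ)
    (hT : ∀ ν : ProbabilityMeasure ℝ,
      (T ν : ℝ → ℝ) =ᵐ[μ] fun x => ((ν : Measure ℝ) (Set.Iic x)).toReal) :
    (∃ C : ℝ, ∀ ω, ‖T (ξ ω)‖ ≤ C) ∧
    StronglyMeasurable (fun ω => T (ξ ω)) ∧
    ∫ ω, T (ξ ω) ∂P = T m := by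
  have hμv : μ ≪ volume :=
    hac.trans (Measure.absolutelyContinuous_of_le Measure.restrict_le_self)
  -- part 1 : uniform norm bound
  have cdf01 : ∀ (ν : ProbabilityMeasure ℝ) (x : ℝ),
      ‖((ν : Measure ℝ) (Set.Iic x)).toReal‖ ≤ 1 := by
    intro ν x
    rw [Real.norm_eq_abs, abs_of_nonneg ENNReal.toReal_nonneg]
    have := prob_le_one (μ := (ν : Measure ℝ)) (s := Set.Iic x)
    simpa using ENNReal.toReal_mono ENNReal.one_ne_top this
  have h1 : ∀ ν : ProbabilityMeasure ℝ,
      ‖T ν‖ ≤ measureUnivNNReal μ ^ ((2:ℝ≥0∞).toReal)⁻¹ * 1 := by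
    intro ν
    refine Lp.norm_le_of_ae_bound zero_le_one ((hT ν).mono fun x hx => ?_)
    rw [hx]; exact cdf01 ν x
  -- part 2 : strong measurability
  have hTcont : Continuous T := aux_T_cont hμv T hT
  haveI : Fact ((2:ℝ≥0∞) ≠ ∞) := ⟨ENNReal.ofNat_ne_top⟩
  letI : MeasurableSpace (Lp ℝ 2 μ) := borel _
  haveI : BorelSpace (Lp ℝ 2 μ) := ⟨rfl⟩
  have hmeas : Measurable (fun ω => T (ξ ω)) :=
    (hTcont.borel_measurable.mono le_rfl (le_of_eq rfl)).comp hξ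
  have hSM : StronglyMeasurable (fun ω => T (ξ ω)) := hmeas.stronglyMeasurable
  refine ⟨⟨_, fun ω => h1 (ξ ω)⟩, hSM, ?_⟩
  -- part 3 : expectation
  have hGint : Integrable (fun ω => T (ξ ω)) P :=
    Integrable.mono' (integrable_const _) hSM.aestronglyMeasurable
      (ae_of_all _ fun ω => h1 (ξ ω))
  refine ext_inner_left ℝ fun g => ?_
  rw [← integral_inner hGint g]
  -- the key affine computation
  have hgL1 : Integrable (⇑g) μ := (Lp.memLp g).integrable one_le_two
  set h : ℝ → ℝ := fun t => ∫ x, Set.indicator (Set.Ici t) (⇑g) x ∂μ with hh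
  have h_bound : ∀ t, ‖h t‖ ≤ ∫ x, ‖g x‖ ∂μ := by
    intro t
    refine (norm_integral_le_integral_norm _).trans ?_
    refine integral_mono_of_nonneg (ae_of_all _ fun x => norm_nonneg _) hgL1.norm
      (ae_of_all _ fun x => norm_indicator_le_norm_self _ _)
  have h_cont : Continuous h := by
    rw [continuous_iff_continuousAt]
    intro t0
    refine tendsto_integral_filter_of_dominated_convergence (fun x => ‖g x‖)
      (Eventually.of_forall fun t =>
        ((Lp.stronglyMeasurable g).indicator measurableSet_Ici).aestronglyMeasurable)
      (Eventually.of_forall fun t => ae_of_all _ fun x => norm_indicator_le_norm_self _ _)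
      hgL1.norm ?_
    have hne : ∀ᵐ x ∂μ, x ≠ t0 := by
      rw [ae_iff]
      have : {x : ℝ | ¬ x ≠ t0} = {t0} := by ext x; simp
      rw [this]
      exact hμv Real.volume_singleton
    filter_upwards [hne] with x hx
    rcases hx.lt_or_gt with hlt | hlt
    · have hev : ∀ᶠ t in 𝓝 t0, x < t := eventually_gt_nhds hlt
      have heq : (fun t => Set.indicator (Set.Ici t) (⇑g) x) =ᶠ[𝓝 t0] fun _ => 0 :=
        hev.mono fun t ht => Set.indicator_of_notMem (by simpa using ht.not_ge) _
      rw [Set.indicator_of_notMem (by simpa using hlt.not_ge)]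
      exact Tendsto.congr' heq.symm tendsto_const_nhds
    · have hev : ∀ᶠ t in 𝓝 t0, t < x := eventually_lt_nhds hlt
      have heq : (fun t => Set.indicator (Set.Ici t) (⇑g) x) =ᶠ[𝓝 t0] fun _ => g x :=
        hev.mono fun t ht => Set.indicator_of_mem (by simpa using ht.le) _
      rw [Set.indicator_of_mem (by simpa using hlt.le)]
      exact Tendsto.congr' heq.symm tendsto_const_nhds
  have keyK : ∀ ν : ProbabilityMeasure ℝ,
      (inner ℝ g (T ν) : ℝ) = ∫ t, h t ∂(ν : Measure ℝ) := by
    intro ν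
    have e1 : (inner ℝ g (T ν) : ℝ)
        = ∫ x, g x * ((ν : Measure ℝ) (Set.Iic x)).toReal ∂μ := by
      rw [L2.inner_def]
      refine integral_congr_ae ((hT ν).mono fun x hx => ?_)
      dsimp only
      rw [RCLike.inner_apply, conj_trivial, hx, mul_comm]
    have hsm : AEStronglyMeasurable
        (Function.uncurry fun x t => Set.indicator (Set.Iic x) (fun _ => g x) t)
        (μ.prod (ν : Measure ℝ)) := by
      have hrw : (Function.uncurry fun x t => Set.indicator (Set.Iic x) (fun _ => g x) t)
          = Set.indicator {p : ℝ × ℝ | p.2 ≤ p.1} (fun p => g p.1) := by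
        funext z
        simp [Function.uncurry, Set.indicator_apply, Set.mem_Iic]
      rw [hrw]
      exact (((Lp.stronglyMeasurable g).comp_measurable measurable_fst).indicator
        (measurableSet_le measurable_snd measurable_fst)).aestronglyMeasurable
    have hint : Integrable
        (Function.uncurry fun x t => Set.indicator (Set.Iic x) (fun _ => g x) t)
        (μ.prod (ν : Measure ℝ)) := by
      refine Integrable.mono' (g := fun z : ℝ × ℝ => ‖g z.1‖) ?_ hsm
        (ae_of_all _ fun z => ?_)
      · have : Integrable (fun z : ℝ × ℝ => ‖g z.1‖ * 1) (μ.prod (ν : Measure ℝ)) :=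
          Integrable.mul_prod hgL1.norm (integrable_const (1:ℝ))
        simp only [mul_one] at this
        exact this
      · show ‖Set.indicator (Set.Iic z.1) (fun _ => (g : ℝ → ℝ) z.1) z.2‖ ≤ ‖(g : ℝ → ℝ) z.1‖
        exact norm_indicator_le_norm_self _ _
    have swap := integral_integral_swap hint
    have e2 : ∫ x, g x * ((ν : Measure ℝ) (Set.Iic x)).toReal ∂μ
        = ∫ x, ∫ t, Set.indicator (Set.Iic x) (fun _ => g x) t ∂(ν : Measure ℝ) ∂μ := by
      refine integral_congr_ae (ae_of_all _ fun x => ?_)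
      dsimp only
      rw [integral_indicator_const _ measurableSet_Iic, smul_eq_mul, mul_comm]
      rfl
    have e3 : ∫ t, ∫ x, Set.indicator (Set.Iic x) (fun _ => g x) t ∂μ ∂(ν : Measure ℝ)
        = ∫ t, h t ∂(ν : Measure ℝ) := by
      refine integral_congr_ae (ae_of_all _ fun t => ?_)
      refine integral_congr_ae (ae_of_all _ fun x => ?_)
      simp [Set.indicator_apply, Set.mem_Iic, Set.mem_Ici]
    rw [e1, e2, swap, e3]
  have hbcf := hbar (BoundedContinuousFunction.ofNormedAddCommGroup h h_cont _ h_bound)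
  simp only [BoundedContinuousFunction.coe_ofNormedAddCommGroup] at hbcf
  calc ∫ ω, (inner ℝ g (T (ξ ω)) : ℝ) ∂P
      = ∫ ω, ∫ t, h t ∂(ξ ω : Measure ℝ) ∂P :=
        integral_congr_ae (ae_of_all _ fun ω => keyK (ξ ω))
    _ = ∫ t, h t ∂(m : Measure ℝ) := hbcf
    _ = (inner ℝ g (T m) : ℝ) := (keyK m).symm
end

section
/- Let ξ be a random element of M₁(ℝ), μ a finite measure equivalent to Lebesgue measure on an interval containing supp(𝔼ξ), F(x) = ξ(−∞, x], and C₀(x,y) = Cov(F(x), F(y)) the covariance kernel. Then each eigenfunction φⱼ of the integral operator C₀^μ on L²(μ) with kernel C₀ associated with a nonzero eigenvalue λⱼ is (has a version that is) a bounded, right-continuous function with left limits (càdlàg). -/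
open MeasureTheory Filter Topology

lemma measEvalIic (x : ℝ) :
    Measurable[borel (ProbabilityMeasure ℝ)]
      (fun ν : ProbabilityMeasure ℝ => ((ν : Measure ℝ) (Set.Iic x)).toReal) := by
  letI : MeasurableSpace (ProbabilityMeasure ℝ) := borel (ProbabilityMeasure ℝ)
  haveI : BorelSpace (ProbabilityMeasure ℝ) := ⟨rfl⟩
  have hcl : IsClosed (Set.Iic x) := isClosed_Iic
  apply measurable_of_tendsto_metrizable
    (f := fun n (ν : ProbabilityMeasure ℝ) =>
      ((ν.toFiniteMeasure.testAgainstNN (hcl.apprSeq n) : NNReal) : ℝ))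
  · intro n
    exact (NNReal.continuous_coe.comp
      (ProbabilityMeasure.continuous_testAgainstNN_eval (hcl.apprSeq n))).measurable
  · rw [tendsto_pi_nhds]
    intro ν
    have h1 : Tendsto (fun n => ∫⁻ ω, hcl.apprSeq n ω ∂(ν : Measure ℝ)) atTop
        (𝓝 ((ν : Measure ℝ) (Set.Iic x))) :=
      HasOuterApproxClosed.tendsto_lintegral_apprSeq hcl (ν : Measure ℝ)
    have hfin : (ν : Measure ℝ) (Set.Iic x) ≠ ⊤ := measure_ne_top _ _
    have h2 := (ENNReal.tendsto_toReal hfin).comp h1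
    have heq : ∀ n, ((ν.toFiniteMeasure.testAgainstNN (hcl.apprSeq n) : NNReal) : ℝ)
        = (∫⁻ ω, hcl.apprSeq n ω ∂(ν : Measure ℝ)).toReal := fun n => by
      rw [show ((ν : Measure ℝ)) = (ν.toFiniteMeasure : Measure ℝ) from rfl,
        ← FiniteMeasure.testAgainstNN_coe_eq, ENNReal.coe_toReal]
    simp_rw [heq]
    exact h2

lemma measurable_of_rightCont {g : ℝ → ℝ} (hg : ∀ x, ContinuousWithinAt g (Set.Ici x) x) :
    Measurable g := by
  apply measurable_of_tendsto_metrizable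
    (f := fun (n : ℕ) (y : ℝ) => g ((⌈y * (n + 1)⌉ : ℝ) / (n + 1)))
  · intro n
    have h1 : Measurable fun y : ℝ => (⌈y * (n + 1)⌉ : ℤ) :=
      Int.measurable_ceil.comp (measurable_id.mul measurable_const)
    exact (measurable_of_countable (fun k : ℤ => g ((k : ℝ) / (n + 1)))).comp h1
  · rw [tendsto_pi_nhds]
    intro y
    have hy : Tendsto (fun n : ℕ => (⌈y * (n + 1)⌉ : ℝ) / (n + 1)) atTop (𝓝[≥] y) := by
      apply tendsto_nhdsWithin_of_tendsto_nhds_of_eventually_within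
      · have hup : Tendsto (fun n : ℕ => y + 1 / ((n : ℝ) + 1)) atTop (𝓝 y) := by
          simpa using tendsto_const_nhds.add (tendsto_one_div_add_atTop_nhds_zero_nat (𝕜 := ℝ))
        apply tendsto_of_tendsto_of_tendsto_of_le_of_le tendsto_const_nhds hup
        · intro n
          rw [le_div_iff₀ (by positivity)]
          calc y * ((n : ℝ) + 1) ≤ ⌈y * ((n : ℝ) + 1)⌉ := Int.le_ceil _
          _ = _ := by norm_num
        · intro n
          rw [div_le_iff₀ (by positivity)]
          have := (Int.ceil_lt_add_one (y * ((n : ℝ) + 1))).le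
          calc ((⌈y * ((n : ℝ) + 1)⌉ : ℝ)) ≤ y * ((n : ℝ) + 1) + 1 := by exact_mod_cast this
          _ ≤ (y + 1 / ((n : ℝ) + 1)) * ((n : ℝ) + 1) := by
              field_simp
              exact le_refl _
      · refine Eventually.of_forall fun n => ?_
        rw [Set.mem_Ici, le_div_iff₀ (by positivity)]
        exact Int.le_ceil _
    exact ((hg y).tendsto).comp hy


/-- Every eigenfunction of the covariance integral operator `C₀^μ` of the random CDF
`F(ω)(x) = ξ(ω)(−∞,x]` associated with a nonzero eigenvalue has a version which is bounded
and càdlàg (right-continuous with left limits). Here `μ` is a finite measure equivalent to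
Lebesgue measure on an interval containing the support of the baricenter `m` of `ξ`. -/
theorem stmt8
    {Ω : Type*} [MeasurableSpace Ω] (P : Measure Ω) [IsProbabilityMeasure P]
    (ξ : Ω → ProbabilityMeasure ℝ)
    (hξ : Measurable[_, borel (ProbabilityMeasure ℝ)] ξ)
    (m : ProbabilityMeasure ℝ)
    (hbar : ∀ f : BoundedContinuousFunction ℝ ℝ,
      ∫ ω, (∫ x, f x ∂((ξ ω : Measure ℝ))) ∂P = ∫ x, f x ∂(m : Measure ℝ))
    (μ : Measure ℝ) [IsFiniteMeasure μ]
    (I : Set ℝ) (hI : I.OrdConnected)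
    (hsupp : measureSupport (m : Measure ℝ) ⊆ I)
    (hac : μ ≪ volume.restrict I) (hac' : volume.restrict I ≪ μ)
    -- the random CDF, its mean and covariance kernel
    (F : Ω → ℝ → ℝ) (hF : ∀ ω x, F ω x = (((ξ ω) : Measure ℝ) (Set.Iic x)).toReal)
    (EF : ℝ → ℝ) (hEF : ∀ x, EF x = ∫ ω, F ω x ∂P)
    (C₀ : ℝ → ℝ → ℝ)
    (hC₀ : ∀ x y, C₀ x y = ∫ ω, (F ω x - EF x) * (F ω y - EF y) ∂P)
    -- an eigenfunction associated with a nonzero eigenvalue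
    (φ : ℝ → ℝ) (hφ : MemLp φ 2 μ)
    (lam : ℝ) (hlam : lam ≠ 0)
    (heig : ∀ᵐ x ∂μ, ∫ y, C₀ x y * φ y ∂μ = lam * φ x) :
    ∃ ψ : ℝ → ℝ, ψ =ᵐ[μ] φ ∧
      (∃ M : ℝ, ∀ x, |ψ x| ≤ M) ∧
      (∀ x, ContinuousWithinAt ψ (Set.Ici x) x) ∧
      (∀ x, ∃ l : ℝ, Filter.Tendsto ψ (nhdsWithin x (Set.Iio x)) (nhds l)) := by
  classical
  -- basic facts about F
  have hFmeas : ∀ x : ℝ, Measurable fun ω => F ω x := by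
    intro x
    have h : (fun ω => F ω x)
        = (fun ν : ProbabilityMeasure ℝ => ((ν : Measure ℝ) (Set.Iic x)).toReal) ∘ ξ := by
      funext ω; simp [hF]
    rw [h]
    exact (measEvalIic x).comp hξ
  have hF0 : ∀ ω x, 0 ≤ F ω x := fun ω x => by rw [hF]; positivity
  have hF1 : ∀ ω x, F ω x ≤ 1 := by
    intro ω x; rw [hF]
    refine ENNReal.toReal_le_of_le_ofReal one_pos.le ?_
    rw [ENNReal.ofReal_one]
    exact prob_le_one
  have hFmono : ∀ ω, Monotone (F ω) := by
    intro ω a b hab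
    rw [hF, hF]
    exact ENNReal.toReal_mono (measure_ne_top _ _) (measure_mono (Set.Iic_subset_Iic.2 hab))
  have hFrc : ∀ ω x, ContinuousWithinAt (F ω) (Set.Ici x) x := by
    intro ω x
    have h : F ω = fun t => ProbabilityTheory.cdf (ξ ω : Measure ℝ) t := by
      funext t; rw [hF, ProbabilityTheory.cdf_eq_real, measureReal_def]
    rw [h]
    exact (ProbabilityTheory.cdf _).right_continuous x
  -- integrability of bounded measurable functions on the probability space
  have hPint : ∀ g : Ω → ℝ, Measurable g → (∀ ω, |g ω| ≤ 1) → Integrable g P := by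
    intro g hmg hbg
    refine ⟨hmg.aestronglyMeasurable, ?_⟩
    apply HasFiniteIntegral.of_bounded (C := (1 : ℝ))
    exact ae_of_all _ fun ω => by simpa [Real.norm_eq_abs] using hbg ω
  have hFint : ∀ x, Integrable (fun ω => F ω x) P := fun x =>
    hPint _ (hFmeas x) fun ω => abs_le.2 ⟨by linarith [hF0 ω x], hF1 ω x⟩
  -- basic facts about EF
  have hEF0 : ∀ x, 0 ≤ EF x := fun x => by
    rw [hEF]; exact integral_nonneg fun ω => hF0 ω x
  have hEF1 : ∀ x, EF x ≤ 1 := by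
    intro x; rw [hEF]
    calc ∫ ω, F ω x ∂P ≤ ∫ _ω, (1 : ℝ) ∂P :=
          integral_mono (hFint x) (integrable_const 1) fun ω => hF1 ω x
    _ = 1 := by simp
  have hEFmono : Monotone EF := by
    intro a b hab; rw [hEF, hEF]
    exact integral_mono (hFint a) (hFint b) fun ω => hFmono ω hab
  have hEFrc : ∀ x, Tendsto EF (𝓝[≥] x) (𝓝 (EF x)) := by
    intro x
    have h : Tendsto (fun x' => ∫ ω, F ω x' ∂P) (𝓝[≥] x) (𝓝 (∫ ω, F ω x ∂P)) := by
      apply tendsto_integral_filter_of_dominated_convergence (bound := fun _ => (1 : ℝ))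
      · exact Eventually.of_forall fun x' => (hFmeas x').aestronglyMeasurable
      · exact Eventually.of_forall fun x' => ae_of_all _ fun ω => by
          rw [Real.norm_eq_abs]; exact abs_le.2 ⟨by linarith [hF0 ω x'], hF1 ω x'⟩
      · exact integrable_const 1
      · exact ae_of_all _ fun ω => (hFrc ω x).tendsto
    have hfun : EF = fun x' => ∫ ω, F ω x' ∂P := funext hEF
    rw [hfun]
    exact h
  -- left limits of F and EF
  have hLF := fun (ω : Ω) (x : ℝ) => (hFmono ω).tendsto_leftLim x
  have hLEF := fun x : ℝ => hEFmono.tendsto_leftLim x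
  have hLF0 : ∀ ω x, 0 ≤ Function.leftLim (F ω) x := fun ω x =>
    ge_of_tendsto (hLF ω x) (Eventually.of_forall fun y => hF0 ω y)
  have hLF1 : ∀ ω x, Function.leftLim (F ω) x ≤ 1 := fun ω x =>
    le_of_tendsto (hLF ω x) (Eventually.of_forall fun y => hF1 ω y)
  have hLEF0 : ∀ x, 0 ≤ Function.leftLim EF x := fun x =>
    ge_of_tendsto (hLEF x) (Eventually.of_forall fun y => hEF0 y)
  have hLEF1 : ∀ x, Function.leftLim EF x ≤ 1 := fun x =>
    le_of_tendsto (hLEF x) (Eventually.of_forall fun y => hEF1 y)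
  have hLFmeas : ∀ x, Measurable fun ω => Function.leftLim (F ω) x := by
    intro x
    have hseq : Tendsto (fun n : ℕ => x - 1 / ((n : ℝ) + 1)) atTop (𝓝[<] x) := by
      apply tendsto_nhdsWithin_of_tendsto_nhds_of_eventually_within
      · simpa using (tendsto_const_nhds (x := x)).sub (tendsto_one_div_add_atTop_nhds_zero_nat (𝕜 := ℝ))
      · refine Eventually.of_forall fun n => ?_
        have h1 : (0 : ℝ) < 1 / ((n : ℝ) + 1) := by positivity
        simp only [Set.mem_Iio]; linarith
    apply measurable_of_tendsto_metrizable (f := fun n ω => F ω (x - 1 / ((n : ℝ) + 1)))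
    · exact fun n => hFmeas _
    · rw [tendsto_pi_nhds]
      exact fun ω => (hLF ω x).comp hseq
  -- the centered CDF G and its properties
  set G : Ω → ℝ → ℝ := fun ω x => F ω x - EF x with hGdef
  have hGabs : ∀ ω x, |G ω x| ≤ 1 := fun ω x =>
    abs_le.2 ⟨by simp only [hGdef]; linarith [hF0 ω x, hEF1 x],
      by simp only [hGdef]; linarith [hF1 ω x, hEF0 x]⟩
  have hGmeas : ∀ x, Measurable fun ω => G ω x := fun x => (hFmeas x).sub measurable_const
  have hGrc : ∀ ω x, Tendsto (fun x' => G ω x') (𝓝[≥] x) (𝓝 (G ω x)) := fun ω x =>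
    ((hFrc ω x).tendsto).sub (hEFrc x)
  -- generic integral kernel facts
  have key : ∀ H : Ω → ℝ, Measurable H → (∀ ω, |H ω| ≤ 1) →
      (∀ y, ContinuousWithinAt (fun y' => ∫ ω, H ω * G ω y' ∂P) (Set.Ici y) y) ∧
      (∀ y, |∫ ω, H ω * G ω y ∂P| ≤ 1) := by
    intro H hHm hHb
    have hb : ∀ y ω, ‖H ω * G ω y‖ ≤ 1 := fun y ω => by
      rw [Real.norm_eq_abs, abs_mul]
      exact mul_le_one₀ (hHb ω) (abs_nonneg _) (hGabs ω y)
    constructor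
    · intro y
      apply tendsto_integral_filter_of_dominated_convergence (bound := fun _ => (1 : ℝ))
      · exact Eventually.of_forall fun y' => (hHm.mul (hGmeas y')).aestronglyMeasurable
      · exact Eventually.of_forall fun y' => ae_of_all _ fun ω => hb y' ω
      · exact integrable_const 1
      · exact ae_of_all _ fun ω => tendsto_const_nhds.mul (hGrc ω y)
    · intro y
      calc |∫ ω, H ω * G ω y ∂P| ≤ 1 * (P Set.univ).toReal := by
            rw [← Real.norm_eq_abs]
            exact norm_integral_le_of_norm_le_const (ae_of_all _ fun ω => hb y ω)
      _ = 1 := by simp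
  -- the kernels C₀ x • and their left-limit versions
  have hC₀eq : ∀ x y, C₀ x y = ∫ ω, G ω x * G ω y ∂P := hC₀
  set Cm : ℝ → ℝ → ℝ := fun x y =>
    ∫ ω, (Function.leftLim (F ω) x - Function.leftLim EF x) * G ω y ∂P with hCmdef
  have hHm : ∀ x : ℝ, Measurable fun ω => Function.leftLim (F ω) x - Function.leftLim EF x :=
    fun x => (hLFmeas x).sub measurable_const
  have hHb : ∀ (x : ℝ) ω, |Function.leftLim (F ω) x - Function.leftLim EF x| ≤ 1 := fun x ω =>
    abs_le.2 ⟨by linarith [hLF0 ω x, hLEF1 x], by linarith [hLF1 ω x, hLEF0 x]⟩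
  have hC₀key := fun x : ℝ => key (fun ω => G ω x) (hGmeas x) (fun ω => hGabs ω x)
  have hCmkey := fun x : ℝ => key _ (hHm x) (hHb x)
  have hC₀meas : ∀ x, Measurable fun y => C₀ x y := by
    intro x
    have h : (fun y => C₀ x y) = fun y => ∫ ω, G ω x * G ω y ∂P := funext fun y => hC₀eq x y
    rw [h]
    exact measurable_of_rightCont (hC₀key x).1
  have hC₀b : ∀ x y, |C₀ x y| ≤ 1 := fun x y => by rw [hC₀eq]; exact (hC₀key x).2 y
  have hCmmeas : ∀ x, Measurable fun y => Cm x y := fun x =>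
    measurable_of_rightCont (hCmkey x).1
  have hCmb : ∀ x y, |Cm x y| ≤ 1 := fun x y => (hCmkey x).2 y
  -- convergence of the kernel in the first variable
  have kerRight : ∀ x y, Tendsto (fun x' => C₀ x' y) (𝓝[≥] x) (𝓝 (C₀ x y)) := by
    intro x y
    have h : (fun x' => C₀ x' y) = fun x' => ∫ ω, G ω x' * G ω y ∂P :=
      funext fun x' => hC₀eq x' y
    rw [h, hC₀eq x y]
    apply tendsto_integral_filter_of_dominated_convergence (bound := fun _ => (1 : ℝ))
    · exact Eventually.of_forall fun x' => ((hGmeas x').mul (hGmeas y)).aestronglyMeasurable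
    · exact Eventually.of_forall fun x' => ae_of_all _ fun ω => by
        rw [Real.norm_eq_abs, abs_mul]
        exact mul_le_one₀ (hGabs ω x') (abs_nonneg _) (hGabs ω y)
    · exact integrable_const 1
    · exact ae_of_all _ fun ω => (hGrc ω x).mul_const (G ω y)
  have kerLeft : ∀ x y, Tendsto (fun x' => C₀ x' y) (𝓝[<] x) (𝓝 (Cm x y)) := by
    intro x y
    have h : (fun x' => C₀ x' y) = fun x' => ∫ ω, G ω x' * G ω y ∂P :=
      funext fun x' => hC₀eq x' y
    rw [h, hCmdef]
    apply tendsto_integral_filter_of_dominated_convergence (bound := fun _ => (1 : ℝ))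
    · exact Eventually.of_forall fun x' => ((hGmeas x').mul (hGmeas y)).aestronglyMeasurable
    · exact Eventually.of_forall fun x' => ae_of_all _ fun ω => by
        rw [Real.norm_eq_abs, abs_mul]
        exact mul_le_one₀ (hGabs ω x') (abs_nonneg _) (hGabs ω y)
    · exact integrable_const 1
    · refine ae_of_all _ fun ω => ?_
      have := ((hLF ω x).sub (hLEF x)).mul_const (G ω y)
      simpa [hGdef] using this
  -- integrability facts for φ
  have hφint : Integrable φ μ := hφ.integrable one_le_two
  have hKint : ∀ K : ℝ → ℝ, Measurable K → (∀ y, |K y| ≤ 1) →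
      Integrable (fun y => K y * φ y) μ := by
    intro K hKm hKb
    refine Integrable.mono' hφint.abs (hKm.aestronglyMeasurable.mul hφ.aestronglyMeasurable)
      (ae_of_all _ fun y => ?_)
    rw [Real.norm_eq_abs, abs_mul]
    exact mul_le_of_le_one_left (abs_nonneg _) (hKb y)
  -- the candidate version ψ
  set ψ : ℝ → ℝ := fun x => lam⁻¹ * ∫ y, C₀ x y * φ y ∂μ with hψdef
  refine ⟨ψ, ?_, ?_, ?_, ?_⟩
  · filter_upwards [heig] with x hx
    rw [hψdef]
    simp only
    rw [hx, inv_mul_cancel_left₀ hlam]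
  · refine ⟨|lam⁻¹| * ∫ y, |φ y| ∂μ, fun x => ?_⟩
    rw [hψdef]
    simp only
    rw [abs_mul]
    refine mul_le_mul_of_nonneg_left ?_ (abs_nonneg _)
    calc |∫ y, C₀ x y * φ y ∂μ| ≤ ∫ y, ‖C₀ x y * φ y‖ ∂μ := by
          rw [← Real.norm_eq_abs]; exact norm_integral_le_integral_norm _
    _ ≤ ∫ y, |φ y| ∂μ := by
        refine integral_mono_of_nonneg (ae_of_all _ fun y => norm_nonneg _) hφint.abs
          (ae_of_all _ fun y => ?_)
        show ‖C₀ x y * φ y‖ ≤ |φ y|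
        rw [Real.norm_eq_abs, abs_mul]
        exact mul_le_of_le_one_left (abs_nonneg _) (hC₀b x y)
  · intro x
    have h : Tendsto (fun x' => ∫ y, C₀ x' y * φ y ∂μ) (𝓝[≥] x)
        (𝓝 (∫ y, C₀ x y * φ y ∂μ)) := by
      apply tendsto_integral_filter_of_dominated_convergence (bound := fun y => |φ y|)
      · exact Eventually.of_forall fun x' =>
          ((hC₀meas x').aestronglyMeasurable.mul hφ.aestronglyMeasurable)
      · exact Eventually.of_forall fun x' => ae_of_all _ fun y => by
          show ‖C₀ x' y * φ y‖ ≤ |φ y|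
          rw [Real.norm_eq_abs, abs_mul]
          exact mul_le_of_le_one_left (abs_nonneg _) (hC₀b x' y)
      · exact hφint.abs
      · exact ae_of_all _ fun y => (kerRight x y).mul_const (φ y)
    exact h.const_mul _
  · intro x
    refine ⟨lam⁻¹ * ∫ y, Cm x y * φ y ∂μ, ?_⟩
    have h : Tendsto (fun x' => ∫ y, C₀ x' y * φ y ∂μ) (𝓝[<] x)
        (𝓝 (∫ y, Cm x y * φ y ∂μ)) := by
      apply tendsto_integral_filter_of_dominated_convergence (bound := fun y => |φ y|)
      · exact Eventually.of_forall fun x' =>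
          ((hC₀meas x').aestronglyMeasurable.mul hφ.aestronglyMeasurable)
      · exact Eventually.of_forall fun x' => ae_of_all _ fun y => by
          show ‖C₀ x' y * φ y‖ ≤ |φ y|
          rw [Real.norm_eq_abs, abs_mul]
          exact mul_le_of_le_one_left (abs_nonneg _) (hC₀b x' y)
      · exact hφint.abs
      · exact ae_of_all _ fun y => (kerLeft x y).mul_const (φ y)
    exact h.const_mul _
end

section
/- Let (ξ_t, X_τ) be a cyclic-independent conjugate process such that (1/n) Σ_{t=0}^{n−1} ξ_t → 𝔼ξ₀ almost surely in the weak* topology. Then for any sequence (τ_i) with τ_i ∈ [i, i+1) and any bounded continuous f : ℝ → ℝ, (1/n) Σ_{i=0}^{n−1} f(X_{τ_i}) → 𝔼[f(X₀)] in probability. -/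
open MeasureTheory ProbabilityTheory Filter Set

noncomputable instance : MeasurableSpace (ProbabilityMeasure ℝ) := borel _

instance : BorelSpace (ProbabilityMeasure ℝ) := ⟨rfl⟩

lemma myIntegrable_of_bound {Ω : Type*} {mΩ : MeasurableSpace Ω} (μ : Measure Ω)
    [IsFiniteMeasure μ] {h : Ω → ℝ} (hm : AEStronglyMeasurable h μ) (C : ℝ)
    (hb : ∀ ω, |h ω| ≤ C) : Integrable h μ :=
  (integrable_const C).mono' hm (Eventually.of_forall fun ω => by
    simpa [Real.norm_eq_abs] using hb ω)

lemma myPiSystem : IsPiSystem (⋃ q : ℚ, {Iic (q : ℝ)}) := by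
  rintro s hs t ht -
  simp only [mem_iUnion, mem_singleton_iff] at hs ht ⊢
  obtain ⟨q, rfl⟩ := hs; obtain ⟨r, rfl⟩ := ht
  exact ⟨min q r, by rw [Iic_inter_Iic, Rat.cast_min]⟩

lemma myGen : (inferInstance : MeasurableSpace ℝ)
    = MeasurableSpace.generateFrom (⋃ q : ℚ, {Iic (q : ℝ)}) := by
  rw [← Real.borel_eq_generateFrom_Iic_rat]
  exact BorelSpace.measurable_eq

lemma aux_ae_indepFun {Ω : Type*} {m' : MeasurableSpace Ω} [mΩ : MeasurableSpace Ω]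
    [StandardBorelSpace Ω]
    {μ : Measure Ω} [IsProbabilityMeasure μ] (hm' : m' ≤ mΩ)
    {Y Z : Ω → ℝ} (hY : Measurable Y) (hZ : Measurable Z)
    (h : CondIndepFun m' hm' Y Z μ) :
    ∀ᵐ ω ∂μ, IndepFun Y Z (condExpKernel μ m' ω) := by
  rw [CondIndepFun, Kernel.indepFun_iff_measure_inter_preimage_eq_mul] at h
  have h' : ∀ᵐ ω ∂(μ.trim hm'), ∀ q r : ℚ,
      condExpKernel μ m' ω (Y ⁻¹' Iic (q:ℝ) ∩ Z ⁻¹' Iic (r:ℝ))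
        = condExpKernel μ m' ω (Y ⁻¹' Iic (q:ℝ)) * condExpKernel μ m' ω (Z ⁻¹' Iic (r:ℝ)) := by
    rw [ae_all_iff]; intro q; rw [ae_all_iff]; intro r
    exact h (Iic (q:ℝ)) (Iic (r:ℝ)) measurableSet_Iic measurableSet_Iic
  filter_upwards [ae_of_ae_trim hm' h'] with ω hω
  have hps : IsPiSystem (⋃ q : ℚ, {Iic (q : ℝ)}) := myPiSystem
  have hgen1 : MeasurableSpace.comap Y (inferInstance : MeasurableSpace ℝ)
      = MeasurableSpace.generateFrom (preimage Y '' (⋃ q : ℚ, {Iic (q : ℝ)})) := by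
    conv_lhs => rw [myGen]
    rw [MeasurableSpace.comap_generateFrom]
  have hgen2 : MeasurableSpace.comap Z (inferInstance : MeasurableSpace ℝ)
      = MeasurableSpace.generateFrom (preimage Z '' (⋃ q : ℚ, {Iic (q : ℝ)})) := by
    conv_lhs => rw [myGen]
    rw [MeasurableSpace.comap_generateFrom]
  have hpi1 : IsPiSystem (preimage Y '' (⋃ q : ℚ, {Iic (q : ℝ)})) := by
    have := hps.comap Y
    convert this using 1
    rfl
  have hpi2 : IsPiSystem (preimage Z '' (⋃ q : ℚ, {Iic (q : ℝ)})) := by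
    have := hps.comap Z
    convert this using 1
    rfl
  have hsets : IndepSets (preimage Y '' (⋃ q : ℚ, {Iic (q : ℝ)}))
      (preimage Z '' (⋃ q : ℚ, {Iic (q : ℝ)})) (condExpKernel μ m' ω) := by
    rintro t1 t2 ⟨s1, hs1, rfl⟩ ⟨s2, hs2, rfl⟩
    simp only [mem_iUnion, mem_singleton_iff] at hs1 hs2
    obtain ⟨q, rfl⟩ := hs1; obtain ⟨r, rfl⟩ := hs2
    refine Eventually.of_forall fun a => ?_
    simpa [Kernel.const_apply] using hω q r
  exact IndepSets.indep hY.comap_le hZ.comap_le hpi1 hpi2 hgen1 hgen2 hsets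

lemma aux_condexp_mul {Ω : Type*} {m' : MeasurableSpace Ω} [mΩ : MeasurableSpace Ω]
    [StandardBorelSpace Ω]
    {μ : Measure Ω} [IsProbabilityMeasure μ] (hm' : m' ≤ mΩ)
    {Y Z : Ω → ℝ} (hY : Measurable Y) (hZ : Measurable Z) (C : ℝ) (hC : 0 ≤ C)
    (hbY : ∀ ω, |Y ω| ≤ C) (hbZ : ∀ ω, |Z ω| ≤ C)
    (h : CondIndepFun m' hm' Y Z μ) :
    μ[(fun ω => Y ω * Z ω)|m'] =ᵐ[μ] fun ω => ((μ[Y|m']) ω) * ((μ[Z|m']) ω) := by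
  have iY : Integrable Y μ := myIntegrable_of_bound μ hY.aestronglyMeasurable C hbY
  have iZ : Integrable Z μ := myIntegrable_of_bound μ hZ.aestronglyMeasurable C hbZ
  have iYZ : Integrable (fun ω => Y ω * Z ω) μ :=
    myIntegrable_of_bound μ (hY.mul hZ).aestronglyMeasurable (C * C) (fun ω => by
      rw [abs_mul]
      exact mul_le_mul (hbY ω) (hbZ ω) (abs_nonneg _) hC)
  have h1 := condExp_ae_eq_integral_condExpKernel hm' iYZ
  have h2 := condExp_ae_eq_integral_condExpKernel hm' iY
  have h3 := condExp_ae_eq_integral_condExpKernel hm' iZ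
  have h4 := aux_ae_indepFun hm' hY hZ h
  filter_upwards [h1, h2, h3, h4] with ω e1 e2 e3 e4
  rw [e1, e2, e3]
  have := e4.integral_mul_eq_mul_integral hY.aestronglyMeasurable hZ.aestronglyMeasurable
  simpa [Pi.mul_apply] using this

/-- Law of Large Numbers for cyclic-independent conjugate processes: if the latent sequence
`(ξ_t)` is ergodic in the sense that its Cesàro averages converge weakly a.s. to the
baricenter `𝔼ξ₀`, then for any sampling times `τ_i ∈ [i, i+1)` and any bounded continuous
`f`, the averages `n⁻¹ Σ_{i<n} f(X_{τ_i})` converge in probability to `𝔼[f(X₀)]`. -/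
theorem stmt12
    {Ω : Type*} [mΩ : MeasurableSpace Ω] [StandardBorelSpace Ω]
    (P : Measure Ω) [IsProbabilityMeasure P]
    (ξ : ℕ → Ω → ProbabilityMeasure ℝ) (hξ : ∀ t, Measurable (ξ t))
    (hstat : ∀ k : ℕ,
      Measure.map (fun ω => fun t : ℕ => ξ (t + k) ω) P
        = Measure.map (fun ω => fun t : ℕ => ξ t ω) P)
    (X : ℝ → Ω → ℝ) (hX : ∀ τ, Measurable (X τ))
    (hle : (⨆ t : ℕ, MeasurableSpace.comap (ξ t) inferInstance) ≤ mΩ)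
    -- the fundamental compatibility equation
    (hconj : ∀ (τ : ℝ), 0 ≤ τ → ∀ B : Set ℝ, MeasurableSet B →
      P[Set.indicator (X τ ⁻¹' B) (fun _ => (1:ℝ))
          | ⨆ t : ℕ, MeasurableSpace.comap (ξ t) inferInstance]
        =ᵐ[P] fun ω => (((ξ ⌊τ⌋₊ ω) : Measure ℝ) B).toReal)
    -- cyclic independence: given Ξ, the restrictions of X to the cycles are independent
    (hcyc : iCondIndepFun (⨆ t : ℕ, MeasurableSpace.comap (ξ t) inferInstance) hle
      (fun t : ℕ => fun ω => fun s : Set.Ico (t : ℝ) ((t : ℝ) + 1) => X s ω) P)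
    -- the baricenter of ξ₀
    (m : ProbabilityMeasure ℝ)
    (hbar : ∀ f : BoundedContinuousFunction ℝ ℝ,
      ∫ ω, (∫ x, f x ∂((ξ 0 ω : Measure ℝ))) ∂P = ∫ x, f x ∂(m : Measure ℝ))
    -- ergodicity: a.s. weak convergence of the Cesàro averages of (ξ_t) to 𝔼ξ₀
    (hergodic : ∀ᵐ ω ∂P, ∀ g : BoundedContinuousFunction ℝ ℝ,
      Tendsto (fun n : ℕ => (n : ℝ)⁻¹ * ∑ t ∈ Finset.range n, ∫ x, g x ∂((ξ t ω : Measure ℝ)))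
        atTop (nhds (∫ x, g x ∂(m : Measure ℝ))))
    (τ : ℕ → ℝ) (hτ : ∀ i : ℕ, τ i ∈ Set.Ico (i : ℝ) ((i : ℝ) + 1))
    (f : BoundedContinuousFunction ℝ ℝ) :
    ∀ ε > (0:ℝ),
      Tendsto (fun n : ℕ =>
          P {ω | ε < |(n : ℝ)⁻¹ * ∑ i ∈ Finset.range n, f (X (τ i) ω)
            - ∫ ω', f (X 0 ω') ∂P|})
        atTop (nhds 0) := by
  intro ε hε
  set m' := ⨆ t : ℕ, MeasurableSpace.comap (ξ t) inferInstance with hm'def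
  letI : MeasurableSpace Ω := mΩ
  set C := ‖f‖ with hCdef
  have hC : 0 ≤ C := norm_nonneg f
  set Y : ℕ → Ω → ℝ := fun i ω => f (X (τ i) ω) with hYdef
  set g : ℕ → Ω → ℝ := fun i ω => ∫ x, f x ∂((ξ i ω : Measure ℝ)) with hgdef
  set a : ℝ := ∫ x, f x ∂(m : Measure ℝ) with hadef
  -- basic measurability and bounds
  have hYm : ∀ i, Measurable[mΩ] (Y i) := fun i => f.continuous.measurable.comp (hX _)
  have hbY : ∀ i ω, |Y i ω| ≤ C := fun i ω => by
    simpa [Real.norm_eq_abs] using f.norm_coe_le_norm (X (τ i) ω)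
  have hgm' : ∀ i, Measurable[m'] (g i) := by
    intro i
    have h1 : Measurable[MeasurableSpace.comap (ξ i) inferInstance] (ξ i) :=
      measurable_iff_comap_le.mpr le_rfl
    have h2 : Measurable fun ν : ProbabilityMeasure ℝ => ∫ x, f x ∂(ν : Measure ℝ) :=
      (ProbabilityMeasure.continuous_integral_boundedContinuousFunction f).measurable
    exact (h2.comp h1).mono
      (le_iSup (fun t => MeasurableSpace.comap (ξ t) inferInstance) i) le_rfl
  have hgm : ∀ i, Measurable[mΩ] (g i) := fun i => (hgm' i).mono hle le_rfl
  have hInt : ∀ (ν : Measure ℝ) [IsProbabilityMeasure ν], |∫ x, f x ∂ν| ≤ C := by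
    intro ν _
    rw [← Real.norm_eq_abs]
    calc ‖∫ x, f x ∂ν‖ ≤ C * (ν univ).toReal :=
          norm_integral_le_of_norm_le_const (Eventually.of_forall fun x =>
            f.norm_coe_le_norm x)
      _ = C := by simp
  have hbg : ∀ i ω, |g i ω| ≤ C := fun i ω => hInt _
  have hba : |a| ≤ C := hInt _
  have iY : ∀ i, Integrable (Y i) P :=
    fun i => myIntegrable_of_bound P (hYm i).aestronglyMeasurable C (hbY i)
  have ig : ∀ i, Integrable (g i) P :=
    fun i => myIntegrable_of_bound P (hgm i).aestronglyMeasurable C (hbg i)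
  have hτ0 : ∀ i : ℕ, (0:ℝ) ≤ τ i := fun i => le_trans (Nat.cast_nonneg i) (hτ i).1
  have hfloor : ∀ i : ℕ, ⌊τ i⌋₊ = i := fun i =>
    (Nat.floor_eq_iff (hτ0 i)).mpr ⟨(hτ i).1, (hτ i).2⟩
  -- conditional mean identity
  have hmean : ∀ σ : ℝ, 0 ≤ σ →
      (P[(fun ω => f (X σ ω))|m']) =ᵐ[P]
        fun ω => ∫ x, f x ∂((ξ ⌊σ⌋₊ ω : Measure ℝ)) := by
    intro σ hσ
    have hker : ∀ᵐ ω ∂P,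
        Measure.map (X σ) (condExpKernel P m' ω) = (ξ ⌊σ⌋₊ ω : Measure ℝ) := by
      have hq : ∀ q : ℚ, ∀ᵐ ω ∂P,
          condExpKernel P m' ω (X σ ⁻¹' Iic (q:ℝ))
            = (ξ ⌊σ⌋₊ ω : Measure ℝ) (Iic (q:ℝ)) := by
        intro q
        have h1 := hconj σ hσ (Iic (q:ℝ)) measurableSet_Iic
        have h2 := condExpKernel_ae_eq_condExp (μ := P) hle
          ((hX σ) (measurableSet_Iic (a := (q:ℝ))))
        filter_upwards [h1, h2] with ω e1 e2
        have h3 : (condExpKernel P m' ω (X σ ⁻¹' Iic (q:ℝ))).toReal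
            = ((ξ ⌊σ⌋₊ ω : Measure ℝ) (Iic (q:ℝ))).toReal := by rw [← measureReal_def, e2, e1]
        exact (ENNReal.toReal_eq_toReal_iff' (measure_ne_top _ _) (measure_ne_top _ _)).mp h3
      rw [← ae_all_iff] at hq
      filter_upwards [hq] with ω hω
      haveI : IsProbabilityMeasure (Measure.map (X σ) (condExpKernel P m' ω)) :=
        Measure.isProbabilityMeasure_map (hX σ).aemeasurable
      refine ext_of_generate_finite (⋃ q : ℚ, {Iic (q:ℝ)}) myGen myPiSystem ?_ ?_
      · rintro s hs
        simp only [mem_iUnion, mem_singleton_iff] at hs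
        obtain ⟨q, rfl⟩ := hs
        rw [Measure.map_apply (hX σ) measurableSet_Iic]
        exact hω q
      · simp
    have hint : Integrable (fun ω => f (X σ ω)) P :=
      myIntegrable_of_bound P (f.continuous.measurable.comp (hX σ)).aestronglyMeasurable C
        (fun ω => by simpa [Real.norm_eq_abs] using f.norm_coe_le_norm (X σ ω))
    have h1 := condExp_ae_eq_integral_condExpKernel hle hint
    filter_upwards [h1, hker] with ω e1 e2
    rw [e1, ← e2]
    exact (integral_map (hX σ).aemeasurable
      f.continuous.measurable.aestronglyMeasurable).symm
  have hg_cond : ∀ i, (P[Y i|m']) =ᵐ[P] g i := by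
    intro i
    have h := hmean (τ i) (hτ0 i)
    rw [hfloor i] at h
    exact h
  -- value of 𝔼[f(X₀)]
  have hEX0 : ∫ ω', f (X 0 ω') ∂P = a := by
    have h := hmean 0 le_rfl
    rw [Nat.floor_zero] at h
    calc ∫ ω', f (X 0 ω') ∂P = ∫ ω, (P[(fun ω => f (X 0 ω))|m']) ω ∂P :=
          (integral_condExp hle).symm
      _ = ∫ ω, (∫ x, f x ∂((ξ 0 ω : Measure ℝ))) ∂P := integral_congr_ae h
      _ = a := hbar f
  -- conditional independence of the sampled values
  have hcond : ∀ i j : ℕ, i ≠ j → CondIndepFun m' hle (Y i) (Y j) P := by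
    intro i j hij
    have h1 := hcyc.condIndepFun hij
    have hφ : ∀ k : ℕ,
        Measurable fun p : (Set.Ico (k:ℝ) ((k:ℝ)+1)) → ℝ => f (p ⟨τ k, hτ k⟩) :=
      fun k => f.continuous.measurable.comp (measurable_pi_apply _)
    exact h1.comp (hφ i) (hφ j)
  -- product rule
  have hprod : ∀ i j : ℕ, i ≠ j →
      (P[(fun ω => Y i ω * Y j ω)|m']) =ᵐ[P] fun ω => g i ω * g j ω := by
    intro i j hij
    have h1 := aux_condexp_mul hle (hYm i) (hYm j) C hC (hbY i) (hbY j) (hcond i j hij)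
    filter_upwards [h1, hg_cond i, hg_cond j] with ω e1 e2 e3
    rw [e1, e2, e3]
  -- integral identities
  have hE1 : ∀ i j : ℕ, i ≠ j →
      ∫ ω, Y i ω * Y j ω ∂P = ∫ ω, g i ω * g j ω ∂P := by
    intro i j hij
    calc ∫ ω, Y i ω * Y j ω ∂P
        = ∫ ω, (P[(fun ω => Y i ω * Y j ω)|m']) ω ∂P := (integral_condExp hle).symm
      _ = ∫ ω, g i ω * g j ω ∂P := integral_congr_ae (hprod i j hij)
  have hE2 : ∀ i j : ℕ,
      ∫ ω, g j ω * Y i ω ∂P = ∫ ω, g i ω * g j ω ∂P := by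
    intro i j
    have hpull := condExp_stronglyMeasurable_mul_of_bound hle
      ((hgm' j).stronglyMeasurable) (iY i) C
      (Eventually.of_forall fun ω => by simpa [Real.norm_eq_abs] using hbg j ω)
    calc ∫ ω, g j ω * Y i ω ∂P
        = ∫ ω, (P[(g j * Y i : Ω → ℝ)|m']) ω ∂P := (integral_condExp hle).symm
      _ = ∫ ω, (g j ω) * ((P[Y i|m']) ω) ∂P := integral_congr_ae hpull
      _ = ∫ ω, g i ω * g j ω ∂P := by
          refine integral_congr_ae ?_
          filter_upwards [hg_cond i] with ω e
          rw [e, mul_comm]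
  -- off-diagonal terms vanish
  have hoff : ∀ i j : ℕ, i ≠ j →
      ∫ ω, (Y i ω - g i ω) * (Y j ω - g j ω) ∂P = 0 := by
    intro i j hij
    have iYY : Integrable (fun ω => Y i ω * Y j ω) P :=
      myIntegrable_of_bound P ((hYm i).mul (hYm j)).aestronglyMeasurable (C*C)
        (fun ω => by rw [abs_mul]; exact mul_le_mul (hbY i ω) (hbY j ω) (abs_nonneg _) hC)
    have igY : ∀ k l : ℕ, Integrable (fun ω => g k ω * Y l ω) P :=
      fun k l => myIntegrable_of_bound P ((hgm k).mul (hYm l)).aestronglyMeasurable (C*C)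
        (fun ω => by rw [abs_mul]; exact mul_le_mul (hbg k ω) (hbY l ω) (abs_nonneg _) hC)
    have igg : Integrable (fun ω => g i ω * g j ω) P :=
      myIntegrable_of_bound P ((hgm i).mul (hgm j)).aestronglyMeasurable (C*C)
        (fun ω => by rw [abs_mul]; exact mul_le_mul (hbg i ω) (hbg j ω) (abs_nonneg _) hC)
    have e3 : ∫ ω, g i ω * Y j ω ∂P = ∫ ω, g i ω * g j ω ∂P := by
      calc ∫ ω, g i ω * Y j ω ∂P = ∫ ω, g j ω * g i ω ∂P := hE2 j i
        _ = ∫ ω, g i ω * g j ω ∂P :=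
            integral_congr_ae (Eventually.of_forall fun ω => mul_comm _ _)
    calc ∫ ω, (Y i ω - g i ω) * (Y j ω - g j ω) ∂P
        = ∫ ω, (Y i ω * Y j ω - g j ω * Y i ω) - (g i ω * Y j ω - g i ω * g j ω) ∂P :=
          integral_congr_ae (Eventually.of_forall fun ω => by ring)
      _ = (∫ ω, Y i ω * Y j ω - g j ω * Y i ω ∂P)
            - ∫ ω, g i ω * Y j ω - g i ω * g j ω ∂P :=
          integral_sub (iYY.sub (igY j i)) ((igY i j).sub igg)
      _ = ((∫ ω, Y i ω * Y j ω ∂P) - ∫ ω, g j ω * Y i ω ∂P)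
            - ((∫ ω, g i ω * Y j ω ∂P) - ∫ ω, g i ω * g j ω ∂P) := by
          rw [integral_sub iYY (igY j i), integral_sub (igY i j) igg]
      _ = 0 := by rw [hE1 i j hij, hE2 i j, e3]; ring
  -- the variance bound
  -- the variance bound
  have hDm : ∀ i : ℕ, Measurable[mΩ] fun ω => Y i ω - g i ω := fun i => (hYm i).sub (hgm i)
  have hbD : ∀ (i : ℕ) (ω : Ω), |Y i ω - g i ω| ≤ 2*C := by
    intro i ω
    have h1 := hbY i ω; have h2 := hbg i ω
    have h3 : |Y i ω - g i ω| ≤ |Y i ω| + |g i ω| := abs_sub _ _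
    linarith
  have key : ∀ n : ℕ,
      ∫ ω, ((n:ℝ)⁻¹ * ∑ i ∈ Finset.range n, (Y i ω - g i ω))^2 ∂P ≤ (2*C)^2 / n := by
    intro n
    have iDD : ∀ i j : ℕ, Integrable (fun ω => (Y i ω - g i ω) * (Y j ω - g j ω)) P := fun i j =>
      myIntegrable_of_bound P ((hDm i).mul (hDm j)).aestronglyMeasurable ((2*C)*(2*C))
        (fun ω => by
          rw [abs_mul]
          exact mul_le_mul (hbD i ω) (hbD j ω) (abs_nonneg _) (by linarith))
    have step1 : ∫ ω, ((n:ℝ)⁻¹ * ∑ i ∈ Finset.range n, (Y i ω - g i ω))^2 ∂P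
        = ((n:ℝ)⁻¹)^2 * ∫ ω, (∑ i ∈ Finset.range n, (Y i ω - g i ω))^2 ∂P := by
      rw [← integral_const_mul]
      exact integral_congr_ae (Eventually.of_forall fun ω => mul_pow _ _ 2)
    have step2 : ∫ ω, (∑ i ∈ Finset.range n, (Y i ω - g i ω))^2 ∂P
        = ∑ i ∈ Finset.range n, ∑ j ∈ Finset.range n,
            ∫ ω, (Y i ω - g i ω) * (Y j ω - g j ω) ∂P := by
      have h1 : ∫ ω, (∑ i ∈ Finset.range n, (Y i ω - g i ω))^2 ∂P
          = ∫ ω, ∑ i ∈ Finset.range n, ∑ j ∈ Finset.range n,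
              (Y i ω - g i ω) * (Y j ω - g j ω) ∂P :=
        integral_congr_ae (Eventually.of_forall fun ω => by
          show (∑ i ∈ Finset.range n, (Y i ω - g i ω))^2
            = ∑ i ∈ Finset.range n, ∑ j ∈ Finset.range n,
                (Y i ω - g i ω) * (Y j ω - g j ω)
          rw [sq, Finset.sum_mul_sum])
      rw [h1]
      rw [integral_finset_sum (Finset.range n)
        (f := fun i ω => ∑ j ∈ Finset.range n, (Y i ω - g i ω) * (Y j ω - g j ω))
        (fun i _ => integrable_finset_sum _ (fun j _ => iDD i j))]
      exact Finset.sum_congr rfl fun i _ =>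
        integral_finset_sum _ (fun j _ => iDD i j)
    have step3 : ∑ i ∈ Finset.range n, ∑ j ∈ Finset.range n,
        ∫ ω, (Y i ω - g i ω) * (Y j ω - g j ω) ∂P ≤ (n:ℝ) * (2*C)^2 := by
      have hrow : ∀ i ∈ Finset.range n, (∑ j ∈ Finset.range n,
          ∫ ω, (Y i ω - g i ω) * (Y j ω - g j ω) ∂P) ≤ (2*C)^2 := by
        intro i hi
        have hsingle : (∑ j ∈ Finset.range n,
            ∫ ω, (Y i ω - g i ω) * (Y j ω - g j ω) ∂P)
            = ∫ ω, (Y i ω - g i ω) * (Y i ω - g i ω) ∂P :=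
          Finset.sum_eq_single_of_mem i hi (fun j _ hji => hoff i j hji.symm)
        rw [hsingle]
        calc ∫ ω, (Y i ω - g i ω) * (Y i ω - g i ω) ∂P
            ≤ ∫ (_ : Ω), (2*C)^2 ∂P := by
              refine integral_mono (iDD i i) (integrable_const _) fun ω => ?_
              have h4 : (Y i ω - g i ω) * (Y i ω - g i ω) = |Y i ω - g i ω|^2 := by
                rw [sq_abs]; ring
              rw [h4]
              exact pow_le_pow_left₀ (abs_nonneg _) (hbD i ω) 2
          _ = (2*C)^2 := by simp
      calc (∑ i ∈ Finset.range n, ∑ j ∈ Finset.range n,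
            ∫ ω, (Y i ω - g i ω) * (Y j ω - g j ω) ∂P)
          ≤ ∑ _i ∈ Finset.range n, (2*C)^2 := Finset.sum_le_sum hrow
        _ = (n:ℝ) * (2*C)^2 := by
            simp [Finset.sum_const, Finset.card_range, nsmul_eq_mul]
    rw [step1, step2]
    calc ((n:ℝ)⁻¹)^2 * (∑ i ∈ Finset.range n, ∑ j ∈ Finset.range n,
          ∫ ω, (Y i ω - g i ω) * (Y j ω - g j ω) ∂P)
        ≤ ((n:ℝ)⁻¹)^2 * ((n:ℝ) * (2*C)^2) :=
          mul_le_mul_of_nonneg_left step3 (by positivity)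
      _ ≤ (2*C)^2 / n := by
          rcases Nat.eq_zero_or_pos n with rfl|hn
          · simp
          · have hn' : (0:ℝ) < n := by exact_mod_cast hn
            have : ((n:ℝ)⁻¹)^2 * ((n:ℝ) * (2*C)^2) = (2*C)^2 / n := by
              field_simp
            rw [this]
  -- averaging helper
  have havg : ∀ (h : ℕ → Ω → ℝ) (B : ℝ), 0 ≤ B → (∀ i ω, |h i ω| ≤ B) →
      ∀ (n : ℕ) (ω : Ω), |(n:ℝ)⁻¹ * ∑ i ∈ Finset.range n, h i ω| ≤ B := by
    intro h B hB hb n ω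
    rcases Nat.eq_zero_or_pos n with rfl|hn
    · simpa using hB
    · have hn' : (0:ℝ) < n := by exact_mod_cast hn
      rw [abs_mul, abs_inv, Nat.abs_cast]
      have h1 : |∑ i ∈ Finset.range n, h i ω| ≤ (n:ℝ) * B := by
        calc |∑ i ∈ Finset.range n, h i ω| ≤ ∑ i ∈ Finset.range n, |h i ω| :=
              Finset.abs_sum_le_sum_abs _ _
          _ ≤ ∑ _i ∈ Finset.range n, B := Finset.sum_le_sum fun i _ => hb i ω
          _ = (n:ℝ) * B := by simp [Finset.sum_const, Finset.card_range, nsmul_eq_mul]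
      calc (n:ℝ)⁻¹ * |∑ i ∈ Finset.range n, h i ω| ≤ (n:ℝ)⁻¹ * ((n:ℝ) * B) :=
            mul_le_mul_of_nonneg_left h1 (by positivity)
        _ = B := by field_simp
  have hsqint : ∀ (u : Ω → ℝ), Measurable[mΩ] u → ∀ B : ℝ, (∀ ω, |u ω| ≤ B) →
      Integrable (fun ω => (u ω)^2) P := by
    intro u hu B hb
    refine myIntegrable_of_bound P (hu.pow_const 2).aestronglyMeasurable (B^2) fun ω => ?_
    rw [abs_pow]
    exact pow_le_pow_left₀ (abs_nonneg _) (hb ω) 2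
  have hAm : ∀ n : ℕ, Measurable[mΩ] fun ω => ((n:ℝ)⁻¹ * ∑ i ∈ Finset.range n, g i ω) - a :=
    fun n => ((Finset.measurable_sum _ fun i _ => hgm i).const_mul _).sub measurable_const
  have hTm : ∀ n : ℕ, Measurable[mΩ] fun ω => ((n:ℝ)⁻¹ * ∑ i ∈ Finset.range n, Y i ω) - a :=
    fun n => ((Finset.measurable_sum _ fun i _ => hYm i).const_mul _).sub measurable_const
  have hbA : ∀ (n : ℕ) (ω : Ω), |((n:ℝ)⁻¹ * ∑ i ∈ Finset.range n, g i ω) - a| ≤ 2*C := by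
    intro n ω
    have h1 := havg g C hC hbg n ω
    have h2 := abs_sub ((n:ℝ)⁻¹ * ∑ i ∈ Finset.range n, g i ω) a
    linarith
  have hbT : ∀ (n : ℕ) (ω : Ω), |((n:ℝ)⁻¹ * ∑ i ∈ Finset.range n, Y i ω) - a| ≤ 2*C := by
    intro n ω
    have h1 := havg Y C hC hbY n ω
    have h2 := abs_sub ((n:ℝ)⁻¹ * ∑ i ∈ Finset.range n, Y i ω) a
    linarith
  have iTsq : ∀ n : ℕ,
      Integrable (fun ω => (((n:ℝ)⁻¹ * ∑ i ∈ Finset.range n, Y i ω) - a)^2) P :=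
    fun n => hsqint _ (hTm n) (2*C) (hbT n)
  have iAsq : ∀ n : ℕ,
      Integrable (fun ω => (((n:ℝ)⁻¹ * ∑ i ∈ Finset.range n, g i ω) - a)^2) P :=
    fun n => hsqint _ (hAm n) (2*C) (hbA n)
  have iDsq : ∀ n : ℕ,
      Integrable (fun ω => ((n:ℝ)⁻¹ * ∑ i ∈ Finset.range n, (Y i ω - g i ω))^2) P :=
    fun n => hsqint _ ((Finset.measurable_sum _ fun i _ => hDm i).const_mul _) (2*C)
      (havg _ (2*C) (by linarith) hbD n)
  -- convergence of the conditional averages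
  have hW : Tendsto (fun n : ℕ =>
      ∫ ω, (((n:ℝ)⁻¹ * ∑ i ∈ Finset.range n, g i ω) - a)^2 ∂P) atTop (nhds 0) := by
    have h0 : (0:ℝ) = ∫ (_ : Ω), (0:ℝ) ∂P := by simp
    rw [h0]
    refine tendsto_integral_of_dominated_convergence (fun _ => (2*C)^2)
      (fun n => ((hAm n).pow_const 2).aestronglyMeasurable) (integrable_const _) ?_ ?_
    · intro n
      refine Eventually.of_forall fun ω => ?_
      rw [Real.norm_eq_abs, abs_pow]
      exact pow_le_pow_left₀ (abs_nonneg _) (hbA n ω) 2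
    · filter_upwards [hergodic] with ω hω
      have base : Tendsto (fun n : ℕ =>
          ((n:ℝ)⁻¹ * ∑ i ∈ Finset.range n, g i ω) - a) atTop (nhds 0) := by
        have := (hω f).sub_const a
        rw [sub_self] at this
        exact this
      have h2 := base.pow 2
      simpa using h2
  -- the L² bound
  have hQb : ∀ n : ℕ, ∫ ω, (((n:ℝ)⁻¹ * ∑ i ∈ Finset.range n, Y i ω) - a)^2 ∂P
      ≤ 2*((2*C)^2/(n:ℝ))
        + 2*(∫ ω, (((n:ℝ)⁻¹ * ∑ i ∈ Finset.range n, g i ω) - a)^2 ∂P) := by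
    intro n
    have hdec : ∀ ω : Ω, ((n:ℝ)⁻¹ * ∑ i ∈ Finset.range n, Y i ω) - a
        = ((n:ℝ)⁻¹ * ∑ i ∈ Finset.range n, (Y i ω - g i ω))
          + (((n:ℝ)⁻¹ * ∑ i ∈ Finset.range n, g i ω) - a) := by
      intro ω
      simp only [Finset.sum_sub_distrib]
      ring
    calc ∫ ω, (((n:ℝ)⁻¹ * ∑ i ∈ Finset.range n, Y i ω) - a)^2 ∂P
        ≤ ∫ ω, (2*((n:ℝ)⁻¹ * ∑ i ∈ Finset.range n, (Y i ω - g i ω))^2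
            + 2*(((n:ℝ)⁻¹ * ∑ i ∈ Finset.range n, g i ω) - a)^2) ∂P := by
          refine integral_mono (iTsq n) (((iDsq n).const_mul 2).add ((iAsq n).const_mul 2))
            fun ω => ?_
          rw [hdec ω]
          nlinarith [sq_nonneg (((n:ℝ)⁻¹ * ∑ i ∈ Finset.range n, (Y i ω - g i ω))
            - (((n:ℝ)⁻¹ * ∑ i ∈ Finset.range n, g i ω) - a))]
      _ = 2*(∫ ω, ((n:ℝ)⁻¹ * ∑ i ∈ Finset.range n, (Y i ω - g i ω))^2 ∂P)
            + 2*(∫ ω, (((n:ℝ)⁻¹ * ∑ i ∈ Finset.range n, g i ω) - a)^2 ∂P) := by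
          rw [integral_add ((iDsq n).const_mul 2) ((iAsq n).const_mul 2),
            integral_const_mul, integral_const_mul]
      _ ≤ 2*((2*C)^2/(n:ℝ))
            + 2*(∫ ω, (((n:ℝ)⁻¹ * ∑ i ∈ Finset.range n, g i ω) - a)^2 ∂P) := by
          have := key n
          nlinarith
  -- convergence of the L² norms
  have hQ : Tendsto (fun n : ℕ =>
      ∫ ω, (((n:ℝ)⁻¹ * ∑ i ∈ Finset.range n, Y i ω) - a)^2 ∂P) atTop (nhds 0) := by
    have hup : Tendsto (fun n : ℕ => 2*((2*C)^2/(n:ℝ))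
        + 2*(∫ ω, (((n:ℝ)⁻¹ * ∑ i ∈ Finset.range n, g i ω) - a)^2 ∂P)) atTop (nhds 0) := by
      have l1 : Tendsto (fun n : ℕ => (2*C)^2/(n:ℝ)) atTop (nhds 0) :=
        tendsto_const_div_atTop_nhds_zero_nat _
      have l2 := (l1.const_mul 2).add (hW.const_mul 2)
      simpa using l2
    refine tendsto_of_tendsto_of_tendsto_of_le_of_le tendsto_const_nhds hup ?_ hQb
    intro n
    exact integral_nonneg fun ω => sq_nonneg _
  -- Chebyshev
  have hε2 : ENNReal.ofReal (ε^2) ≠ 0 := by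
    simp only [ne_eq, ENNReal.ofReal_eq_zero, not_le]
    positivity
  have hcheb : ∀ n : ℕ, P {ω | ε < |((n:ℝ)⁻¹ * ∑ i ∈ Finset.range n, Y i ω) - a|}
      ≤ ENNReal.ofReal (∫ ω, (((n:ℝ)⁻¹ * ∑ i ∈ Finset.range n, Y i ω) - a)^2 ∂P)
        / ENNReal.ofReal (ε^2) := by
    intro n
    have h1 : {ω | ε < |((n:ℝ)⁻¹ * ∑ i ∈ Finset.range n, Y i ω) - a|}
        ⊆ {ω | ENNReal.ofReal (ε^2)
            ≤ ENNReal.ofReal ((((n:ℝ)⁻¹ * ∑ i ∈ Finset.range n, Y i ω) - a)^2)} := by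
      intro ω hω
      simp only [mem_setOf_eq] at hω ⊢
      apply ENNReal.ofReal_le_ofReal
      calc ε^2 ≤ |((n:ℝ)⁻¹ * ∑ i ∈ Finset.range n, Y i ω) - a|^2 :=
            pow_le_pow_left₀ hε.le hω.le 2
        _ = (((n:ℝ)⁻¹ * ∑ i ∈ Finset.range n, Y i ω) - a)^2 := sq_abs _
    have h2 := mul_meas_ge_le_lintegral₀ (μ := P)
      (f := fun ω => ENNReal.ofReal ((((n:ℝ)⁻¹ * ∑ i ∈ Finset.range n, Y i ω) - a)^2))
      (ENNReal.measurable_ofReal.comp ((hTm n).pow_const 2)).aemeasurable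
      (ENNReal.ofReal (ε^2))
    have h3 : ∫⁻ ω, ENNReal.ofReal ((((n:ℝ)⁻¹ * ∑ i ∈ Finset.range n, Y i ω) - a)^2) ∂P
        = ENNReal.ofReal (∫ ω, (((n:ℝ)⁻¹ * ∑ i ∈ Finset.range n, Y i ω) - a)^2 ∂P) :=
      (ofReal_integral_eq_lintegral_ofReal (iTsq n)
        (Eventually.of_forall fun ω => sq_nonneg _)).symm
    rw [h3] at h2
    calc P {ω | ε < |((n:ℝ)⁻¹ * ∑ i ∈ Finset.range n, Y i ω) - a|}
        ≤ P {ω | ENNReal.ofReal (ε^2)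
            ≤ ENNReal.ofReal ((((n:ℝ)⁻¹ * ∑ i ∈ Finset.range n, Y i ω) - a)^2)} :=
          measure_mono h1
      _ ≤ ENNReal.ofReal (∫ ω, (((n:ℝ)⁻¹ * ∑ i ∈ Finset.range n, Y i ω) - a)^2 ∂P)
            / ENNReal.ofReal (ε^2) := by
          rw [ENNReal.le_div_iff_mul_le (Or.inl hε2) (Or.inl ENNReal.ofReal_ne_top)]
          rw [mul_comm]
          exact h2
  -- conclusion
  have hbound : Tendsto (fun n : ℕ =>
      ENNReal.ofReal (∫ ω, (((n:ℝ)⁻¹ * ∑ i ∈ Finset.range n, Y i ω) - a)^2 ∂P)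
        / ENNReal.ofReal (ε^2)) atTop (nhds 0) := by
    have l1 : Tendsto (fun n : ℕ =>
        ENNReal.ofReal (∫ ω, (((n:ℝ)⁻¹ * ∑ i ∈ Finset.range n, Y i ω) - a)^2 ∂P))
        atTop (nhds 0) := by
      have := ENNReal.tendsto_ofReal hQ
      simpa using this
    simp only [ENNReal.div_eq_inv_mul]
    have l2 := ENNReal.Tendsto.const_mul l1
      (Or.inr (ENNReal.inv_ne_top.mpr hε2))
    simpa using l2
  have hfinal : Tendsto (fun n : ℕ =>
      P {ω | ε < |((n:ℝ)⁻¹ * ∑ i ∈ Finset.range n, Y i ω) - a|}) atTop (nhds 0) :=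
    tendsto_of_tendsto_of_tendsto_of_le_of_le tendsto_const_nhds hbound
      (fun n => zero_le) hcheb
  rw [hEX0]
  simp only [hYdef] at hfinal
  exact hfinal
end

section
/- Let H₁, …, Hₙ be independent, centered (Bochner mean zero) random elements in a separable Hilbert space 𝓗 with ‖H_t‖ ≤ c/2 almost surely for all t, for some c > 0. Then for every ε ≥ c/2, ℙ(‖Σ_{t=1}^n H_t‖ > √n ε) ≤ exp(−(ε − c/2)² / (c²/2)). -/
open MeasureTheory ProbabilityTheory Real Set Function


lemma key_aux {p : ℝ} (hp0 : 0 ≤ p) (hp1 : p ≤ 1) (u : ℝ) :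
    (1 - p) * Real.exp (-(p * u)) + p * Real.exp ((1 - p) * u) ≤ Real.exp (u ^ 2 / 8) := by
  have hD : ∀ v : ℝ, 0 < 1 - p + p * Real.exp v := by
    intro v
    rcases eq_or_lt_of_le hp1 with h | h
    · rw [h]; simpa using Real.exp_pos v
    · nlinarith [Real.exp_pos v, mul_nonneg hp0 (Real.exp_pos v).le]
  set F : ℝ → ℝ := fun v => p * v + v ^ 2 / 8 - Real.log (1 - p + p * Real.exp v) with hFdef
  set F' : ℝ → ℝ := fun v => p + v / 4 - p * Real.exp v / (1 - p + p * Real.exp v) with hF'def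
  have hderiv : ∀ v, HasDerivAt F (F' v) v := by
    intro v
    have h1 : HasDerivAt (fun v : ℝ => 1 - p + p * Real.exp v) (p * Real.exp v) v := by
      simpa using ((Real.hasDerivAt_exp v).const_mul p).const_add (1 - p)
    have h2 := h1.log (hD v).ne'
    have h3 : HasDerivAt (fun v : ℝ => p * v + v ^ 2 / 8) (p + v / 4) v := by
      have := ((hasDerivAt_pow 2 v).div_const 8).const_add (p * v)
      have h4 := (hasDerivAt_id v).const_mul p
      exact (h4.add ((hasDerivAt_pow 2 v).div_const 8)) |>.congr_deriv (by ring)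
    exact h3.sub h2
  have hderiv' : ∀ v, HasDerivAt F'
      (1 / 4 - p * Real.exp v * (1 - p) / (1 - p + p * Real.exp v) ^ 2) v := by
    intro v
    have h1 : HasDerivAt (fun v : ℝ => 1 - p + p * Real.exp v) (p * Real.exp v) v := by
      simpa using ((Real.hasDerivAt_exp v).const_mul p).const_add (1 - p)
    have h2 : HasDerivAt (fun v : ℝ => p * Real.exp v) (p * Real.exp v) v :=
      (Real.hasDerivAt_exp v).const_mul p
    have h3 := h2.div h1 (hD v).ne'
    have h4 : HasDerivAt (fun v : ℝ => p + v / 4) (1 / 4) v := by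
      simpa using ((hasDerivAt_id v).div_const 4).const_add p
    have h5 := h4.sub h3
    have e : (1:ℝ) / 4 - p * Real.exp v * (1 - p) / (1 - p + p * Real.exp v) ^ 2
        = 1 / 4 - (p * Real.exp v * (1 - p + p * Real.exp v) - p * Real.exp v * (p * Real.exp v))
          / (1 - p + p * Real.exp v) ^ 2 := by
      ring
    exact h5.congr_deriv e.symm
  have hF'0 : F' 0 = 0 := by simp [hF'def]
  have hmono : Monotone F' := by
    refine monotone_of_deriv_nonneg (fun v => (hderiv' v).differentiableAt) ?_
    intro v
    rw [(hderiv' v).deriv]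
    have := hD v
    have h2 : p * Real.exp v * (1 - p) * 4 ≤ (1 - p + p * Real.exp v) ^ 2 := by
      nlinarith [sq_nonneg (1 - p - p * Real.exp v)]
    rw [sub_nonneg, div_le_iff₀ (by positivity)]
    nlinarith
  have hF0 : F 0 = 0 := by simp [hFdef]
  have hFnonneg : ∀ v, 0 ≤ F v := by
    intro v
    rcases le_total 0 v with hv | hv
    · have hm : MonotoneOn F (Ici 0) := by
        refine monotoneOn_of_deriv_nonneg (convex_Ici 0)
          (fun x _ => (hderiv x).continuousAt.continuousWithinAt)
          (fun x _ => (hderiv x).differentiableAt.differentiableWithinAt) ?_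
        intro x hx
        rw [(hderiv x).deriv, ← hF'0]
        exact hmono (le_of_lt (by simpa using hx))
      have := hm (self_mem_Ici) (by exact hv) hv
      rwa [hF0] at this
    · have hm : AntitoneOn F (Iic 0) := by
        refine antitoneOn_of_deriv_nonpos (convex_Iic 0)
          (fun x _ => (hderiv x).continuousAt.continuousWithinAt)
          (fun x _ => (hderiv x).differentiableAt.differentiableWithinAt) ?_
        intro x hx
        rw [(hderiv x).deriv, ← hF'0]
        exact hmono (le_of_lt (by simpa using hx))
      have := hm (by exact hv) (self_mem_Iic) hv
      rwa [hF0] at this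
  -- conclude
  have hlog : Real.log (1 - p + p * Real.exp u) ≤ p * u + u ^ 2 / 8 := by
    have := hFnonneg u
    simp only [hFdef, sub_nonneg] at this
    linarith
  have hDle : 1 - p + p * Real.exp u ≤ Real.exp (p * u + u ^ 2 / 8) :=
    (Real.log_le_iff_le_exp (hD u)).mp hlog
  have hrw : (1 - p) * Real.exp (-(p * u)) + p * Real.exp ((1 - p) * u)
      = Real.exp (-(p * u)) * (1 - p + p * Real.exp u) := by
    rw [show (1 - p) * u = u + -(p * u) by ring, Real.exp_add]
    ring
  rw [hrw]
  calc Real.exp (-(p * u)) * (1 - p + p * Real.exp u)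
      ≤ Real.exp (-(p * u)) * Real.exp (p * u + u ^ 2 / 8) := by
        exact mul_le_mul_of_nonneg_left hDle (Real.exp_pos _).le
    _ = Real.exp (u ^ 2 / 8) := by rw [← Real.exp_add]; ring_nf

lemma hoeffding_mgf {Ω : Type*} [MeasurableSpace Ω] (μ : Measure Ω) [IsProbabilityMeasure μ]
    (X : Ω → ℝ) (hX : Measurable X) (a b l : ℝ) (hab : ∀ ω, X ω ∈ Set.Icc a b) :
    ∫ ω, Real.exp (l * (X ω - ∫ x, X x ∂μ)) ∂μ ≤ Real.exp (l ^ 2 * (b - a) ^ 2 / 8) := by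
  have hne : Nonempty Ω := by
    by_contra h
    rw [not_nonempty_iff] at h
    have h0 : (μ Set.univ) = 1 := measure_univ
    rw [Set.univ_eq_empty_iff.mpr h, measure_empty] at h0
    exact zero_ne_one h0
  have hXi : Integrable X μ := by
    refine Integrable.mono' (integrable_const (max |a| |b|)) hX.aestronglyMeasurable ?_
    exact ae_of_all _ fun ω => abs_le_max_abs_abs (hab ω).1 (hab ω).2
  set m : ℝ := ∫ x, X x ∂μ with hm
  have hma : a ≤ m := by
    have := integral_mono (integrable_const a) hXi (fun ω => (hab ω).1)
    simpa using this
  have hmb : m ≤ b := by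
    have := integral_mono hXi (integrable_const b) (fun ω => (hab ω).2)
    simpa using this
  have hab' : a ≤ b := le_trans hma hmb
  rcases eq_or_lt_of_le hab' with heq | hlt
  · have hXa : ∀ ω, X ω = a := fun ω => le_antisymm (heq ▸ (hab ω).2) (hab ω).1
    have hma' : m = a := by
      rw [hm, integral_congr_ae (ae_of_all _ fun ω => hXa ω)]
      simp
    have : ∀ ω, Real.exp (l * (X ω - m)) = 1 := by
      intro ω; rw [hXa, hma']; simp
    rw [integral_congr_ae (ae_of_all _ this)]
    simp only [integral_const, probReal_univ, one_smul, smul_eq_mul, mul_one]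
    exact Real.one_le_exp (by positivity)
  · have hba : (0:ℝ) < b - a := sub_pos.mpr hlt
    -- pointwise convexity bound
    have hpt : ∀ ω, Real.exp (l * X ω) ≤
        ((b - X ω) * Real.exp (l * a) + (X ω - a) * Real.exp (l * b)) / (b - a) := by
      intro ω
      have h1 := (hab ω).1
      have h2 := (hab ω).2
      have hθ0 : 0 ≤ (b - X ω) / (b - a) := div_nonneg (by linarith) hba.le
      have hθ1 : 0 ≤ (X ω - a) / (b - a) := by
        apply div_nonneg (by linarith) hba.le
      have hsum : (b - X ω) / (b - a) + (X ω - a) / (b - a) = 1 := by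
        field_simp; ring
      have hcx := convexOn_exp.2 (Set.mem_univ (l * a)) (Set.mem_univ (l * b)) hθ0 hθ1 hsum
      have harg : (b - X ω) / (b - a) * (l * a) + (X ω - a) / (b - a) * (l * b) = l * X ω := by
        field_simp
        ring
      simp only [smul_eq_mul] at hcx
      rw [harg] at hcx
      calc Real.exp (l * X ω) ≤ (b - X ω) / (b - a) * Real.exp (l * a)
            + (X ω - a) / (b - a) * Real.exp (l * b) := hcx
        _ = ((b - X ω) * Real.exp (l * a) + (X ω - a) * Real.exp (l * b)) / (b - a) := by ring
    -- integrability
    have hint1 : Integrable (fun ω => Real.exp (l * X ω)) μ := by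
      refine Integrable.mono' (integrable_const (max (Real.exp (l * a)) (Real.exp (l * b))))
        ((measurable_exp.comp (hX.const_mul l)).aestronglyMeasurable) ?_
      refine ae_of_all _ fun ω => ?_
      rw [Real.norm_eq_abs, abs_of_pos (Real.exp_pos _)]
      rcases le_total 0 l with hl | hl
      · exact le_max_of_le_right (Real.exp_le_exp.2 (mul_le_mul_of_nonneg_left (hab ω).2 hl))
      · exact le_max_of_le_left (Real.exp_le_exp.2 (mul_le_mul_of_nonpos_left (hab ω).1 hl))
    have hint2 : Integrable
        (fun ω => ((b - X ω) * Real.exp (l * a) + (X ω - a) * Real.exp (l * b)) / (b - a)) μ := by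
      apply Integrable.div_const
      exact (((integrable_const b).sub hXi).mul_const _).add ((hXi.sub (integrable_const a)).mul_const _)
    have hIle : ∫ ω, Real.exp (l * X ω) ∂μ ≤
        ((b - m) * Real.exp (l * a) + (m - a) * Real.exp (l * b)) / (b - a) := by
      calc ∫ ω, Real.exp (l * X ω) ∂μ
          ≤ ∫ ω, ((b - X ω) * Real.exp (l * a) + (X ω - a) * Real.exp (l * b)) / (b - a) ∂μ :=
            integral_mono hint1 hint2 hpt
        _ = ((b - m) * Real.exp (l * a) + (m - a) * Real.exp (l * b)) / (b - a) := by
            rw [integral_div]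
            congr 1
            have iA : Integrable (fun ω => (b - X ω) * Real.exp (l * a)) μ :=
              ((integrable_const b).sub hXi).mul_const _
            have iB : Integrable (fun ω => (X ω - a) * Real.exp (l * b)) μ :=
              (hXi.sub (integrable_const a)).mul_const _
            rw [integral_add iA iB, integral_mul_const, integral_mul_const,
              integral_sub (integrable_const b) hXi, integral_sub hXi (integrable_const a)]
            simp [← hm]
    -- reduce goal
    have hgoal : ∫ ω, Real.exp (l * (X ω - m)) ∂μ
        = Real.exp (-(l * m)) * ∫ ω, Real.exp (l * X ω) ∂μ := by
      rw [← integral_const_mul]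
      congr 1
      funext ω
      rw [← Real.exp_add]
      ring_nf
    rw [hgoal]
    set p : ℝ := (m - a) / (b - a) with hp
    set u : ℝ := l * (b - a) with hu
    have hp0 : 0 ≤ p := div_nonneg (by linarith) hba.le
    have hp1 : p ≤ 1 := by
      rw [hp, div_le_one hba]; linarith
    have hend : Real.exp (-(l * m)) *
        (((b - m) * Real.exp (l * a) + (m - a) * Real.exp (l * b)) / (b - a))
        = (1 - p) * Real.exp (-(p * u)) + p * Real.exp ((1 - p) * u) := by
      have e1 : -(p * u) = l * a + -(l * m) := by
        rw [hp, hu]; field_simp; ring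
      have e2 : (1 - p) * u = l * b + -(l * m) := by
        rw [hp, hu]; field_simp; ring
      have e3 : 1 - p = (b - m) / (b - a) := by
        rw [hp]; field_simp; ring
      rw [e1, e2, e3, hp, Real.exp_add, Real.exp_add]
      field_simp
    calc Real.exp (-(l * m)) * ∫ ω, Real.exp (l * X ω) ∂μ
        ≤ Real.exp (-(l * m)) *
          (((b - m) * Real.exp (l * a) + (m - a) * Real.exp (l * b)) / (b - a)) :=
          mul_le_mul_of_nonneg_left hIle (Real.exp_pos _).le
      _ = (1 - p) * Real.exp (-(p * u)) + p * Real.exp ((1 - p) * u) := hend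
      _ ≤ Real.exp (u ^ 2 / 8) := key_aux hp0 hp1 u
      _ = Real.exp (l ^ 2 * (b - a) ^ 2 / 8) := by rw [hu]; ring_nf

lemma osc_bound {E : Type*} {n : ℕ} (f : (Fin n → E) → ℝ) (c : ℝ)
    (hosc : ∀ (x : Fin n → E) (i : Fin n) (v : E), |f (Function.update x i v) - f x| ≤ c) :
    ∀ x x' : Fin n → E, |f x - f x'| ≤ n * c := by
  suffices h : ∀ s : Finset (Fin n), ∀ x x' : Fin n → E,
      (∀ i, i ∉ s → x i = x' i) → |f x - f x'| ≤ s.card * c by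
    intro x x'
    have := h Finset.univ x x' (fun i hi => absurd (Finset.mem_univ i) hi)
    simpa using this
  intro s
  induction s using Finset.induction_on with
  | empty =>
    intro x x' h
    have : x = x' := funext fun i => h i (Finset.notMem_empty i)
    simp [this]
  | insert _ _ ha =>
    rename_i a s ih
    intro x x' h
    set y := Function.update x a (x' a) with hy
    have hyx' : ∀ i, i ∉ s → y i = x' i := by
      intro i hi
      rcases eq_or_ne i a with rfl | hia
      · simp [hy]
      · rw [hy, Function.update_of_ne hia]
        exact h i (by simp [hia, hi])
    have h1 : |f y - f x| ≤ c := hosc x a (x' a)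
    have h2 : |f y - f x'| ≤ s.card * c := ih y x' hyx'
    have hc : 0 ≤ c := le_trans (abs_nonneg _) h1
    calc |f x - f x'| ≤ |f x - f y| + |f y - f x'| := abs_sub_le _ _ _
      _ ≤ c + s.card * c := add_le_add (by rwa [abs_sub_comm]) h2
      _ = (insert a s).card * c := by
          rw [Finset.card_insert_of_notMem ha]; push_cast; ring

lemma mcdiarmid_mgf {E : Type*} [MeasurableSpace E] [Nonempty E] :
    ∀ (n : ℕ) (μ : Fin n → Measure E), (∀ i, IsProbabilityMeasure (μ i)) →
    ∀ (f : (Fin n → E) → ℝ), Measurable f →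
    ∀ (c l : ℝ), 0 ≤ c →
    (∀ (x : Fin n → E) (i : Fin n) (v : E), |f (Function.update x i v) - f x| ≤ c) →
    ∫ x, Real.exp (l * (f x - ∫ y, f y ∂(Measure.pi μ))) ∂(Measure.pi μ)
      ≤ Real.exp (n * (l ^ 2 * c ^ 2 / 8)) := by
  intro n
  induction n with
  | zero =>
    intro μ hprob f hf c l hc hosc
    haveI : ∀ i, IsProbabilityMeasure (μ i) := hprob
    have hx0 : ∀ x : Fin 0 → E, f x = f (fun i => i.elim0) := by
      intro x; congr 1; exact Subsingleton.elim _ _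
    have hIf : ∫ y, f y ∂(Measure.pi μ) = f (fun i => i.elim0) := by
      rw [integral_congr_ae (ae_of_all _ hx0)]
      simp
    rw [integral_congr_ae (ae_of_all _ (fun x => by rw [hx0 x, hIf]))]
    simp
  | succ n ih =>
    intro μ hprob f hf c l hc hosc
    haveI : ∀ i, IsProbabilityMeasure (μ i) := hprob
    set ν := Measure.pi μ with hν
    set μ0 := μ 0 with hμ0
    set μt : Fin n → Measure E := fun j => μ (Fin.succAbove 0 j) with hμt
    haveI : ∀ j, IsProbabilityMeasure (μt j) := fun j => hprob _
    set Pn := Measure.pi μt with hPn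
    set e := MeasurableEquiv.piFinSuccAbove (fun _ : Fin (n+1) => E) 0 with he
    have mp : MeasurePreserving e ν (μ0.prod Pn) := measurePreserving_piFinSuccAbove μ 0
    have hsymm : ∀ (x₀ : E) (y : Fin n → E), e.symm (x₀, y) = Fin.cons x₀ y := by
      intro x₀ y
      show (Fin.insertNthEquiv (fun _ : Fin (n+1) => E) 0).symm.symm (x₀, y) = _
      simp [Fin.insertNth_zero', Fin.consEquiv]
    -- boundedness of f
    obtain ⟨z⟩ := ‹Nonempty E›
    set B : ℝ := |f (fun _ => z)| + (n+1) * c with hB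
    have hfb : ∀ x, |f x| ≤ B := by
      intro x
      have := osc_bound f c hosc x (fun _ => z)
      rw [hB]
      calc |f x| ≤ |f x - f (fun _ => z)| + |f (fun _ => z)| := by
            have := abs_sub_abs_le_abs_sub (f x) (f (fun _ => z)); have := abs_sub_le (f x) (f (fun _ => z)) 0; simp at this; linarith [abs_sub_le (f x) (f (fun _ => z)) 0]
        _ ≤ (n+1) * c + |f (fun _ => z)| := by
            push_cast at this ⊢; linarith
        _ = _ := by ring
    -- M
    set M : ℝ := ∫ y, f y ∂ν with hM
    have hMb : |M| ≤ B := by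
      rw [hM]
      calc |∫ y, f y ∂ν| ≤ ∫ y, |f y| ∂ν := by simpa [Real.norm_eq_abs] using norm_integral_le_integral_norm (μ := ν) f
        _ ≤ ∫ _, B ∂ν := by
            refine integral_mono ?_ (integrable_const B) (fun x => hfb x)
            refine Integrable.mono' (integrable_const B) (hf.abs.aestronglyMeasurable) ?_
            exact ae_of_all _ fun x => by simpa using hfb x
        _ = B := by simp
    have hB0 : 0 ≤ B := le_trans (abs_nonneg _) (hfb (fun _ => z))
    -- measurability of cons
    have hconsm : Measurable (fun q : E × (Fin n → E) => (Fin.cons q.1 q.2 : Fin (n+1) → E)) := by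
      apply measurable_pi_iff.2
      intro i
      refine Fin.cases ?_ ?_ i
      · simpa using measurable_fst
      · intro j; simp only [Fin.cons_succ]; exact (measurable_pi_apply j).comp measurable_snd
    have hfc : Measurable (fun q : E × (Fin n → E) => f (Fin.cons q.1 q.2)) := hf.comp hconsm
    -- the function g
    set g : (Fin n → E) → ℝ := fun y => ∫ x₀, f (Fin.cons x₀ y) ∂μ0 with hg
    have hgm : Measurable g := (hfc.stronglyMeasurable.integral_prod_left').measurable
    have hXm : ∀ y : Fin n → E, Measurable (fun x₀ => f (Fin.cons x₀ y)) := fun y =>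
      (hf.comp hconsm).comp (measurable_id.prodMk measurable_const)
    have hXi : ∀ y : Fin n → E, Integrable (fun x₀ => f (Fin.cons x₀ y)) μ0 := by
      intro y
      refine Integrable.mono' (integrable_const B) (hXm y).aestronglyMeasurable ?_
      exact ae_of_all _ fun x₀ => by simpa [Real.norm_eq_abs] using hfb (Fin.cons x₀ y)
    have hgb : ∀ y, |g y| ≤ B := by
      intro y
      calc |g y| ≤ ∫ x₀, |f (Fin.cons x₀ y)| ∂μ0 := by
            simpa [Real.norm_eq_abs] using
              norm_integral_le_integral_norm (μ := μ0) (fun x₀ => f (Fin.cons x₀ y))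
        _ ≤ ∫ _, B ∂μ0 := integral_mono (hXi y).abs (integrable_const B)
            (fun x₀ => hfb (Fin.cons x₀ y))
        _ = B := by simp
    -- oscillation of g
    have hoscg : ∀ (y : Fin n → E) (j : Fin n) (v : E), |g (update y j v) - g y| ≤ c := by
      intro y j v
      have key : ∀ x₀ : E, f (Fin.cons x₀ (update y j v))
          = f (update (Fin.cons x₀ y) j.succ v) := by
        intro x₀; rw [Fin.cons_update]
      rw [hg]
      simp only []
      rw [← integral_sub (hXi _) (hXi y)]
      calc |∫ x₀, (f (Fin.cons x₀ (update y j v)) - f (Fin.cons x₀ y)) ∂μ0|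
          ≤ ∫ x₀, |f (Fin.cons x₀ (update y j v)) - f (Fin.cons x₀ y)| ∂μ0 := by
            simpa [Real.norm_eq_abs] using norm_integral_le_integral_norm (μ := μ0)
              (fun x₀ => f (Fin.cons x₀ (update y j v)) - f (Fin.cons x₀ y))
        _ ≤ ∫ _, c ∂μ0 := by
            refine integral_mono ((hXi _).sub (hXi y)).abs (integrable_const c) ?_
            intro x₀
            show |f (Fin.cons x₀ (update y j v)) - f (Fin.cons x₀ y)| ≤ c
            rw [key x₀]
            exact hosc (Fin.cons x₀ y) j.succ v
        _ = c := by simp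
    -- master Fubini identity
    have hmain : ∀ (F : (Fin (n+1) → E) → ℝ),
        Integrable (fun q : E × (Fin n → E) => F (Fin.cons q.1 q.2)) (μ0.prod Pn) →
        ∫ x, F x ∂ν = ∫ y, ∫ x₀, F (Fin.cons x₀ y) ∂μ0 ∂Pn := by
      intro F hFi
      have h1 := mp.integral_comp e.measurableEmbedding (fun q => F (Fin.cons q.1 q.2))
      have h2 : ∀ x : Fin (n+1) → E, Fin.cons (e x).1 (e x).2 = x := by
        intro x
        have h3 := hsymm (e x).1 (e x).2
        rw [← h3, Prod.mk.eta, e.symm_apply_apply]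
      rw [show (fun x => F (Fin.cons (e x).1 (e x).2)) = F from funext fun x => by rw [h2]] at h1
      rw [h1]
      exact integral_prod_symm (fun q => F (Fin.cons q.1 q.2)) hFi
    -- Fubini for f itself
    have hfint : Integrable (fun q : E × (Fin n → E) => f (Fin.cons q.1 q.2)) (μ0.prod Pn) := by
      refine Integrable.mono' (integrable_const B) hfc.aestronglyMeasurable ?_
      exact ae_of_all _ fun q => by simpa [Real.norm_eq_abs] using hfb (Fin.cons q.1 q.2)
    have hMg : ∫ y, g y ∂Pn = M := (hmain f hfint).symm
    -- integrability of the exponential integrand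
    have habs2B : ∀ x : Fin (n+1) → E, Real.exp (l * (f x - M)) ≤ Real.exp (|l| * (2 * B)) := by
      intro x
      apply Real.exp_le_exp.2
      calc l * (f x - M) ≤ |l * (f x - M)| := le_abs_self _
        _ = |l| * |f x - M| := abs_mul _ _
        _ ≤ |l| * (2 * B) := by
            apply mul_le_mul_of_nonneg_left _ (abs_nonneg l)
            calc |f x - M| ≤ |f x| + |M| := abs_sub _ _
              _ ≤ 2 * B := by linarith [hfb x, hMb]
    have hGi : Integrable
        (fun q : E × (Fin n → E) => Real.exp (l * (f (Fin.cons q.1 q.2) - M))) (μ0.prod Pn) := by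
      refine Integrable.mono' (integrable_const (Real.exp (|l| * (2 * B))))
        (((hfc.sub measurable_const).const_mul l).exp).aestronglyMeasurable ?_
      refine ae_of_all _ fun q => ?_
      rw [Real.norm_eq_abs, abs_of_pos (Real.exp_pos _)]
      exact habs2B _
    rw [hmain (fun x => Real.exp (l * (f x - M))) hGi]
    -- inner bound via Hoeffding
    have hinner : ∀ y, ∫ x₀, Real.exp (l * (f (Fin.cons x₀ y) - M)) ∂μ0
        ≤ Real.exp (l ^ 2 * c ^ 2 / 8) * Real.exp (l * (g y - M)) := by
      intro y
      set X : E → ℝ := fun x₀ => f (Fin.cons x₀ y) with hX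
      have hXosc : ∀ u u' : E, |X u - X u'| ≤ c := by
        intro u u'
        have h := hosc (Fin.cons u' y) 0 u
        rwa [Fin.update_cons_zero] at h
      set a := sInf (Set.range X) with ha
      have hbddX : BddBelow (Set.range X) := by
        refine ⟨X z - c, ?_⟩
        rintro _ ⟨u, rfl⟩
        have h := hXosc z u
        rw [abs_sub_le_iff] at h
        linarith [h.1]
      have haX : ∀ u, a ≤ X u := fun u => csInf_le hbddX ⟨u, rfl⟩
      have hXa : ∀ u, X u ≤ a + c := by
        intro u
        have h : X u - c ≤ a := by
          refine le_csInf ⟨X z, Set.mem_range_self z⟩ ?_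
          rintro _ ⟨u', rfl⟩
          have h := hXosc u u'
          rw [abs_sub_le_iff] at h
          linarith [h.1]
        linarith
      have hXmeas : Measurable X := hXm y
      have hhoef := hoeffding_mgf μ0 X hXmeas a (a + c) l (fun u => ⟨haX u, hXa u⟩)
      have hXmean : (∫ u, X u ∂μ0) = g y := rfl
      rw [hXmean, add_sub_cancel_left] at hhoef
      have hsplit : ∀ u, Real.exp (l * (X u - M))
          = Real.exp (l * (X u - g y)) * Real.exp (l * (g y - M)) := by
        intro u; rw [← Real.exp_add]; ring_nf
      calc ∫ x₀, Real.exp (l * (X x₀ - M)) ∂μ0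
          = (∫ x₀, Real.exp (l * (X x₀ - g y)) ∂μ0) * Real.exp (l * (g y - M)) := by
            rw [← integral_mul_const]
            exact integral_congr_ae (ae_of_all _ hsplit)
        _ ≤ Real.exp (l ^ 2 * c ^ 2 / 8) * Real.exp (l * (g y - M)) :=
            mul_le_mul_of_nonneg_right hhoef (Real.exp_pos _).le
    -- outer integral
    have houter1 : Integrable
        (fun y => ∫ x₀, Real.exp (l * (f (Fin.cons x₀ y) - M)) ∂μ0) Pn :=
      hGi.integral_prod_right
    have houter2 : Integrable
        (fun y => Real.exp (l ^ 2 * c ^ 2 / 8) * Real.exp (l * (g y - M))) Pn := by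
      apply Integrable.const_mul
      refine Integrable.mono' (integrable_const (Real.exp (|l| * (2 * B))))
        (((hgm.sub measurable_const).const_mul l).exp).aestronglyMeasurable ?_
      refine ae_of_all _ fun y => ?_
      rw [Real.norm_eq_abs, abs_of_pos (Real.exp_pos _)]
      apply Real.exp_le_exp.2
      calc l * (g y - M) ≤ |l * (g y - M)| := le_abs_self _
        _ = |l| * |g y - M| := abs_mul _ _
        _ ≤ |l| * (2 * B) := by
            apply mul_le_mul_of_nonneg_left _ (abs_nonneg l)
            calc |g y - M| ≤ |g y| + |M| := abs_sub _ _
              _ ≤ 2 * B := by linarith [hgb y, hMb]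
    calc ∫ y, ∫ x₀, Real.exp (l * (f (Fin.cons x₀ y) - M)) ∂μ0 ∂Pn
        ≤ ∫ y, Real.exp (l ^ 2 * c ^ 2 / 8) * Real.exp (l * (g y - M)) ∂Pn :=
          integral_mono houter1 houter2 hinner
      _ = Real.exp (l ^ 2 * c ^ 2 / 8) * ∫ y, Real.exp (l * (g y - M)) ∂Pn :=
          integral_const_mul _ _
      _ ≤ Real.exp (l ^ 2 * c ^ 2 / 8) * Real.exp (n * (l ^ 2 * c ^ 2 / 8)) := by
          apply mul_le_mul_of_nonneg_left _ (Real.exp_pos _).le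
          have hIH := ih μt (fun j => hprob _) g hgm c l hc hoscg
          rwa [hMg] at hIH
      _ = Real.exp ((n + 1 : ℕ) * (l ^ 2 * c ^ 2 / 8)) := by
          rw [← Real.exp_add]; push_cast; ring_nf

lemma map_tuple_eq_pi {Ω 𝓗 : Type*} [MeasurableSpace Ω] [MeasurableSpace 𝓗]
    (P : Measure Ω) [IsProbabilityMeasure P]
    {n : ℕ} (H : Fin n → Ω → 𝓗) (hmeas : ∀ t, Measurable (H t))
    (hindep : iIndepFun H P) :
    P.map (fun ω i => H i ω) = Measure.pi (fun i => P.map (H i)) := by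
  haveI : ∀ i, IsProbabilityMeasure (P.map (H i)) :=
    fun i => Measure.isProbabilityMeasure_map (hmeas i).aemeasurable
  refine (Measure.pi_eq ?_).symm
  intro s hs
  rw [Measure.map_apply (measurable_pi_lambda _ fun i => hmeas i) (MeasurableSet.univ_pi hs)]
  have hpre : (fun ω i => H i ω) ⁻¹' (Set.pi Set.univ s) = ⋂ i ∈ Finset.univ, H i ⁻¹' s i := by
    ext ω; simp [Set.mem_pi]
  rw [hpre, hindep.measure_inter_preimage_eq_mul Finset.univ (fun i _ => hs i)]
  exact Finset.prod_congr rfl fun i _ => (Measure.map_apply (hmeas i) (hs i)).symm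

lemma cross_term_zero {Ω 𝓗 : Type*} [MeasurableSpace Ω]
    [NormedAddCommGroup 𝓗] [InnerProductSpace ℝ 𝓗] [CompleteSpace 𝓗]
    [SecondCountableTopology 𝓗] [MeasurableSpace 𝓗] [BorelSpace 𝓗]
    (P : Measure Ω) [IsProbabilityMeasure P]
    (F G : Ω → 𝓗) (hF : Measurable F) (hG : Measurable G)
    (hFG : IndepFun F G P) (b : ℝ)
    (hFb : ∀ ω, ‖F ω‖ ≤ b) (hGb : ∀ ω, ‖G ω‖ ≤ b)
    (hGmean : ∫ ω, G ω ∂P = 0) :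
    ∫ ω, (inner ℝ (F ω) (G ω) : ℝ) ∂P = 0 := by
  haveI : IsProbabilityMeasure (P.map F) := Measure.isProbabilityMeasure_map hF.aemeasurable
  haveI : IsProbabilityMeasure (P.map G) := Measure.isProbabilityMeasure_map hG.aemeasurable
  have hmap : P.map (fun ω => (F ω, G ω)) = (P.map F).prod (P.map G) :=
    (indepFun_iff_map_prod_eq_prod_map_map hF.aemeasurable hG.aemeasurable).1 hFG
  have hinnm : Measurable (fun p : 𝓗 × 𝓗 => (inner ℝ p.1 p.2 : ℝ)) :=
    measurable_fst.inner measurable_snd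
  have h1 : ∫ ω, (inner ℝ (F ω) (G ω) : ℝ) ∂P
      = ∫ p : 𝓗 × 𝓗, (inner ℝ p.1 p.2 : ℝ) ∂((P.map F).prod (P.map G)) := by
    rw [← hmap, integral_map (hF.prodMk hG).aemeasurable hinnm.aestronglyMeasurable]
  rw [h1]
  -- a.e. bounds on the marginals
  have hFb' : ∀ᵐ x ∂(P.map F), ‖x‖ ≤ b := by
    rw [ae_map_iff hF.aemeasurable (measurableSet_le measurable_norm measurable_const)]
    exact ae_of_all _ hFb
  have hGb' : ∀ᵐ y ∂(P.map G), ‖y‖ ≤ b := by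
    rw [ae_map_iff hG.aemeasurable (measurableSet_le measurable_norm measurable_const)]
    exact ae_of_all _ hGb
  have hint : Integrable (fun p : 𝓗 × 𝓗 => (inner ℝ p.1 p.2 : ℝ)) ((P.map F).prod (P.map G)) := by
    refine Integrable.mono' (integrable_const (b * b)) hinnm.aestronglyMeasurable ?_
    have h2 : ∀ᵐ p ∂((P.map F).prod (P.map G)), ‖p.1‖ ≤ b ∧ ‖p.2‖ ≤ b := by
      rw [Measure.ae_prod_iff_ae_ae]
      · filter_upwards [hFb'] with x hx
        filter_upwards [hGb'] with y hy
        exact ⟨hx, hy⟩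
      · exact (measurableSet_le (measurable_norm.comp measurable_fst) measurable_const).inter
          (measurableSet_le (measurable_norm.comp measurable_snd) measurable_const)
    filter_upwards [h2] with p hp
    rw [Real.norm_eq_abs]
    calc |(inner ℝ p.1 p.2 : ℝ)| ≤ ‖p.1‖ * ‖p.2‖ := abs_real_inner_le_norm _ _
      _ ≤ b * b := by
          have h0 := norm_nonneg p.1
          exact mul_le_mul hp.1 hp.2 (norm_nonneg _) (le_trans h0 hp.1)
  rw [integral_prod _ hint]
  have hGint : Integrable (fun y : 𝓗 => y) (P.map G) := by
    refine Integrable.mono' (integrable_const b) measurable_id.aestronglyMeasurable ?_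
    exact hGb'
  have hGzero : ∫ y : 𝓗, y ∂(P.map G) = 0 := by
    have h4 := integral_map (μ := P) (φ := G) (f := fun y : 𝓗 => y) hG.aemeasurable
      measurable_id.aestronglyMeasurable
    exact h4.trans hGmean
  have : ∀ x : 𝓗, ∫ y : 𝓗, (inner ℝ x y : ℝ) ∂(P.map G) = 0 := by
    intro x
    rw [integral_inner hGint x, hGzero, inner_zero_right]
  simp only [this]
  simp

/-- Hilbert-space Hoeffding inequality: if `H₁,…,Hₙ` are independent, centered random
elements of a separable Hilbert space with `‖H_t‖ ≤ c/2` a.s., then for every `ε ≥ c/2`,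
`ℙ(‖Σ H_t‖ > √n ε) ≤ exp(−(ε − c/2)²/(c²/2))`. -/
theorem stmt16
    {Ω : Type*} [MeasurableSpace Ω] (P : Measure Ω) [IsProbabilityMeasure P]
    {𝓗 : Type*} [NormedAddCommGroup 𝓗] [InnerProductSpace ℝ 𝓗] [CompleteSpace 𝓗]
    [SecondCountableTopology 𝓗] [MeasurableSpace 𝓗] [BorelSpace 𝓗]
    (n : ℕ) (H : Fin n → Ω → 𝓗)
    (hmeas : ∀ t, Measurable (H t))
    (hindep : iIndepFun H P)
    (c : ℝ) (hc : 0 < c)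
    (hbdd : ∀ t, ∀ᵐ ω ∂P, ‖H t ω‖ ≤ c / 2)
    (hcentered : ∀ t, ∫ ω, H t ω ∂P = 0) :
    ∀ ε : ℝ, c / 2 ≤ ε →
      (P {ω | Real.sqrt n * ε < ‖∑ t, H t ω‖}).toReal
        ≤ Real.exp (-(ε - c / 2) ^ 2 / (c ^ 2 / 2)) := by
  intro ε hε
  have hexp0 : (0:ℝ) ≤ Real.exp (-(ε - c / 2) ^ 2 / (c ^ 2 / 2)) := (Real.exp_pos _).le
  rcases Nat.eq_zero_or_pos n with hn | hn
  · subst hn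
    have hset : {ω : Ω | Real.sqrt ((0:ℕ):ℝ) * ε < ‖∑ t : Fin 0, H t ω‖} = ∅ := by
      ext ω; simp
    rw [hset]
    simpa using hexp0
  -- setup
  have hc2 : (0:ℝ) ≤ c / 2 := by linarith
  haveI : Nonempty 𝓗 := ⟨0⟩
  set S : Set 𝓗 := {v | ‖v‖ ≤ c / 2} with hS
  have hSm : MeasurableSet S := measurableSet_le measurable_norm measurable_const
  set K : 𝓗 → 𝓗 := S.indicator id with hK
  have hKm : Measurable K := measurable_id.indicator hSm
  have hKb : ∀ v, ‖K v‖ ≤ c / 2 := by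
    intro v
    by_cases hv : v ∈ S
    · rw [hK, Set.indicator_of_mem hv]; exact hv
    · rw [hK, Set.indicator_of_notMem hv]; simpa using hc2
  have hKH : ∀ t, ∀ᵐ ω ∂P, K (H t ω) = H t ω := by
    intro t
    filter_upwards [hbdd t] with ω hω
    exact Set.indicator_of_mem (show H t ω ∈ S from hω) id
  set X' : Ω → ℝ := fun ω => ‖∑ t, K (H t ω)‖ with hX'
  have hsum_m : Measurable fun ω => ∑ t, K (H t ω) :=
    Finset.measurable_sum _ (fun t _ => hKm.comp (hmeas t))
  have hX'm : Measurable X' := hsum_m.norm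
  have hX'0 : ∀ ω, 0 ≤ X' ω := fun ω => norm_nonneg _
  have hX'b : ∀ ω, X' ω ≤ n * (c / 2) := by
    intro ω
    calc X' ω ≤ ∑ t, ‖K (H t ω)‖ := norm_sum_le _ _
      _ ≤ ∑ _t : Fin n, (c / 2) := Finset.sum_le_sum (fun t _ => hKb _)
      _ = n * (c / 2) := by simp [Finset.sum_const, mul_comm]
  have hX'i : Integrable X' P := by
    refine Integrable.mono' (integrable_const ((n:ℝ) * (c / 2))) hX'm.aestronglyMeasurable ?_
    exact ae_of_all _ fun ω => by
      rw [Real.norm_eq_abs, abs_of_nonneg (hX'0 ω)]; exact hX'b ω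
  have hXX' : (fun ω => ‖∑ t, H t ω‖) =ᵐ[P] X' := by
    have hall : ∀ᵐ ω ∂P, ∀ t, K (H t ω) = H t ω := (MeasureTheory.ae_all_iff).2 hKH
    filter_upwards [hall] with ω hω
    rw [hX']
    congr 1
    exact Finset.sum_congr rfl fun t _ => (hω t).symm
  set m : ℝ := ∫ ω, X' ω ∂P with hm
  have hm0 : 0 ≤ m := integral_nonneg hX'0
  -- second moment
  have hinner_int : ∀ s t : Fin n,
      Integrable (fun ω => (inner ℝ (K (H s ω)) (K (H t ω)) : ℝ)) P := by
    intro s t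
    refine Integrable.mono' (integrable_const ((c/2) * (c/2)))
      (((hKm.comp (hmeas s)).inner (hKm.comp (hmeas t))).aestronglyMeasurable) ?_
    refine ae_of_all _ fun ω => ?_
    rw [Real.norm_eq_abs]
    calc |(inner ℝ (K (H s ω)) (K (H t ω)) : ℝ)| ≤ ‖K (H s ω)‖ * ‖K (H t ω)‖ :=
          abs_real_inner_le_norm _ _
      _ ≤ (c/2) * (c/2) := mul_le_mul (hKb _) (hKb _) (norm_nonneg _) hc2
  have hcross : ∀ s t : Fin n, s ≠ t →
      ∫ ω, (inner ℝ (K (H s ω)) (K (H t ω)) : ℝ) ∂P = 0 := by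
    intro s t hst
    refine cross_term_zero P (fun ω => K (H s ω)) (fun ω => K (H t ω))
      (hKm.comp (hmeas s)) (hKm.comp (hmeas t))
      ((hindep.indepFun hst).comp hKm hKm) (c/2) (fun ω => hKb _) (fun ω => hKb _) ?_
    rw [integral_congr_ae (hKH t)]
    exact hcentered t
  have hsq : ∫ ω, X' ω ^ 2 ∂P ≤ n * (c / 2) ^ 2 := by
    have hexpand : ∀ ω, X' ω ^ 2 = ∑ s, ∑ t, (inner ℝ (K (H s ω)) (K (H t ω)) : ℝ) := by
      intro ω
      rw [hX']
      simp only []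
      rw [← real_inner_self_eq_norm_sq, sum_inner]
      exact Finset.sum_congr rfl fun s _ => inner_sum _ _ _
    rw [integral_congr_ae (ae_of_all _ hexpand),
      integral_finset_sum _ (fun s _ => integrable_finset_sum _ (fun t _ => hinner_int s t))]
    have hrow : ∀ s : Fin n, ∫ ω, (∑ t, (inner ℝ (K (H s ω)) (K (H t ω)) : ℝ)) ∂P ≤ (c/2)^2 := by
      intro s
      rw [integral_finset_sum _ (fun t _ => hinner_int s t)]
      rw [Finset.sum_eq_single s (fun t _ hts => hcross s t (Ne.symm hts)) (by simp)]
      calc ∫ ω, (inner ℝ (K (H s ω)) (K (H s ω)) : ℝ) ∂P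
          ≤ ∫ _ω, (c/2)^2 ∂P := by
            refine integral_mono (hinner_int s s) (integrable_const _) (fun ω => ?_)
            rw [real_inner_self_eq_norm_sq]
            exact pow_le_pow_left₀ (norm_nonneg _) (hKb _) 2
        _ = (c/2)^2 := by simp
    calc ∑ s, ∫ ω, (∑ t, (inner ℝ (K (H s ω)) (K (H t ω)) : ℝ)) ∂P
        ≤ ∑ _s : Fin n, (c/2)^2 := Finset.sum_le_sum (fun s _ => hrow s)
      _ = n * (c/2)^2 := by simp [Finset.sum_const, mul_comm]
  have hX'sq_i : Integrable (fun ω => X' ω ^ 2) P := by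
    refine Integrable.mono' (integrable_const (((n:ℝ) * (c/2))^2))
      ((hX'm.pow_const 2).aestronglyMeasurable) ?_
    refine ae_of_all _ fun ω => ?_
    rw [Real.norm_eq_abs, abs_of_nonneg (sq_nonneg _)]
    exact pow_le_pow_left₀ (hX'0 ω) (hX'b ω) 2
  have hm2 : m ^ 2 ≤ ∫ ω, X' ω ^ 2 ∂P := by
    have hvar : 0 ≤ ∫ ω, (X' ω - m) ^ 2 ∂P := integral_nonneg (fun ω => sq_nonneg _)
    have hpt : ∀ ω, (X' ω - m) ^ 2 = X' ω ^ 2 - 2 * m * X' ω + m ^ 2 := fun ω => by ring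
    rw [integral_congr_ae (ae_of_all _ hpt)] at hvar
    have i1 : Integrable (fun ω => X' ω ^ 2 - 2 * m * X' ω) P :=
      hX'sq_i.sub (hX'i.const_mul (2*m))
    have i2 : Integrable (fun ω => 2 * m * X' ω) P := hX'i.const_mul (2*m)
    rw [integral_add i1 (integrable_const _), integral_sub hX'sq_i i2,
      integral_const_mul] at hvar
    simp only [integral_const, probReal_univ, one_smul, smul_eq_mul] at hvar
    rw [← hm] at hvar
    nlinarith [hvar]
  have hmle : m ≤ Real.sqrt n * (c / 2) := by
    have h1 : m ^ 2 ≤ (n:ℝ) * (c/2)^2 := le_trans hm2 hsq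
    have h2 : m ≤ Real.sqrt ((n:ℝ) * (c/2)^2) := by
      rw [← Real.sqrt_sq hm0]
      exact Real.sqrt_le_sqrt h1
    rwa [Real.sqrt_mul (Nat.cast_nonneg n), Real.sqrt_sq hc2] at h2
  -- mgf bound via McDiarmid
  set A : Ω → (Fin n → 𝓗) := fun ω i => H i ω with hA
  have hAm : Measurable A := measurable_pi_lambda _ (fun i => hmeas i)
  haveI : ∀ i, IsProbabilityMeasure (P.map (H i)) :=
    fun i => Measure.isProbabilityMeasure_map (hmeas i).aemeasurable
  have hmapA : P.map A = Measure.pi (fun i => P.map (H i)) :=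
    map_tuple_eq_pi P H hmeas hindep
  set f : (Fin n → 𝓗) → ℝ := fun x => ‖∑ i, K (x i)‖ with hf
  have hfm : Measurable f :=
    (Finset.measurable_sum _ (fun i _ => hKm.comp (measurable_pi_apply i))).norm
  have hfosc : ∀ (x : Fin n → 𝓗) (i : Fin n) (v : 𝓗),
      |f (Function.update x i v) - f x| ≤ c := by
    intro x i v
    have hupd : (fun j => K (Function.update x i v j))
        = Function.update (fun j => K (x j)) i (K v) := by
      funext j
      rcases eq_or_ne j i with rfl | hj
      · simp
      · simp [Function.update_of_ne hj]
    have h1 : ∑ j, K (Function.update x i v j)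
        = K v + ∑ j ∈ Finset.univ \ {i}, K (x j) := by
      rw [hupd]
      exact Finset.sum_update_of_mem (Finset.mem_univ i) _ _
    have h2 : ∑ j, K (x j) = K (x i) + ∑ j ∈ Finset.univ \ {i}, K (x j) :=
      Finset.sum_eq_add_sum_sdiff_singleton_of_mem (Finset.mem_univ i) _
    show |‖∑ j, K (Function.update x i v j)‖ - ‖∑ j, K (x j)‖| ≤ c
    rw [h1, h2]
    calc |‖K v + ∑ j ∈ Finset.univ \ {i}, K (x j)‖
          - ‖K (x i) + ∑ j ∈ Finset.univ \ {i}, K (x j)‖|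
        ≤ ‖(K v + ∑ j ∈ Finset.univ \ {i}, K (x j))
          - (K (x i) + ∑ j ∈ Finset.univ \ {i}, K (x j))‖ := abs_norm_sub_norm_le _ _
      _ = ‖K v - K (x i)‖ := by congr 1; abel
      _ ≤ ‖K v‖ + ‖K (x i)‖ := norm_sub_le _ _
      _ ≤ c / 2 + c / 2 := add_le_add (hKb _) (hKb _)
      _ = c := by ring
  have hmean_transfer : ∫ x, f x ∂(Measure.pi fun i => P.map (H i)) = m := by
    rw [← hmapA, integral_map hAm.aemeasurable hfm.aestronglyMeasurable]
  have hmgf : ∀ l : ℝ, ∫ ω, Real.exp (l * (X' ω - m)) ∂P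
      ≤ Real.exp (n * (l ^ 2 * c ^ 2 / 8)) := by
    intro l
    have h1 : ∫ ω, Real.exp (l * (X' ω - m)) ∂P
        = ∫ x, Real.exp (l * (f x - m)) ∂(P.map A) := by
      rw [integral_map (f := fun x => Real.exp (l * (f x - m))) hAm.aemeasurable
        (((hfm.sub measurable_const).const_mul l).exp).aestronglyMeasurable]
    rw [h1, hmapA]
    have := mcdiarmid_mgf n (fun i => P.map (H i)) (fun i => inferInstance) f hfm c l hc.le hfosc
    rwa [hmean_transfer] at this
  -- Chernoff
  set l : ℝ := 4 * (ε - c / 2) / (Real.sqrt n * c ^ 2) with hl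
  have hs : 0 < Real.sqrt n := Real.sqrt_pos.2 (by exact_mod_cast hn)
  have hl0 : 0 ≤ l := by
    apply div_nonneg (by linarith) (by positivity)
  have hint : Integrable (fun ω => Real.exp (l * X' ω)) P := by
    refine Integrable.mono' (integrable_const (Real.exp (l * ((n:ℝ) * (c/2)))))
      ((hX'm.const_mul l).exp.aestronglyMeasurable) ?_
    refine ae_of_all _ fun ω => ?_
    rw [Real.norm_eq_abs, abs_of_pos (Real.exp_pos _)]
    exact Real.exp_le_exp.2 (mul_le_mul_of_nonneg_left (hX'b ω) hl0)
  have hstep0 : (P {ω | Real.sqrt n * ε < ‖∑ t, H t ω‖}).toReal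
      ≤ (P {ω | Real.sqrt n * ε ≤ X' ω}).toReal := by
    have hsets : {ω | Real.sqrt n * ε < ‖∑ t, H t ω‖}
        =ᵐ[P] {ω | Real.sqrt n * ε < X' ω} := by
      rw [Filter.eventuallyEq_set]
      filter_upwards [hXX'] with ω hω
      simp only [Set.mem_setOf_eq, hω]
    rw [measure_congr hsets]
    refine ENNReal.toReal_mono (measure_ne_top P _) (measure_mono ?_)
    intro ω hω
    simp only [Set.mem_setOf_eq] at hω ⊢
    exact le_of_lt hω
  have hstep1 := measure_ge_le_exp_mul_mgf (X := X') (μ := P) (t := l)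
    (Real.sqrt n * ε) hl0 hint
  have hstep2 : mgf X' P l ≤ Real.exp (l * m) * Real.exp ((n:ℝ) * (l ^ 2 * c ^ 2 / 8)) := by
    have hsplit : ∀ ω, Real.exp (l * X' ω)
        = Real.exp (l * m) * Real.exp (l * (X' ω - m)) := by
      intro ω; rw [← Real.exp_add]; ring_nf
    calc mgf X' P l = ∫ ω, Real.exp (l * X' ω) ∂P := rfl
      _ = Real.exp (l * m) * ∫ ω, Real.exp (l * (X' ω - m)) ∂P := by
          rw [← integral_const_mul]
          exact integral_congr_ae (ae_of_all _ hsplit)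
      _ ≤ Real.exp (l * m) * Real.exp ((n:ℝ) * (l ^ 2 * c ^ 2 / 8)) :=
          mul_le_mul_of_nonneg_left (hmgf l) (Real.exp_pos _).le
  have hfinal : Real.exp (-l * (Real.sqrt n * ε))
      * (Real.exp (l * m) * Real.exp ((n:ℝ) * (l ^ 2 * c ^ 2 / 8)))
      ≤ Real.exp (-(ε - c / 2) ^ 2 / (c ^ 2 / 2)) := by
    have hmono : Real.exp (l * m) ≤ Real.exp (l * (Real.sqrt n * (c/2))) :=
      Real.exp_le_exp.2 (mul_le_mul_of_nonneg_left hmle hl0)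
    calc Real.exp (-l * (Real.sqrt n * ε))
        * (Real.exp (l * m) * Real.exp ((n:ℝ) * (l ^ 2 * c ^ 2 / 8)))
        ≤ Real.exp (-l * (Real.sqrt n * ε))
          * (Real.exp (l * (Real.sqrt n * (c/2))) * Real.exp ((n:ℝ) * (l ^ 2 * c ^ 2 / 8))) := by
          apply mul_le_mul_of_nonneg_left _ (Real.exp_pos _).le
          exact mul_le_mul_of_nonneg_right hmono (Real.exp_pos _).le
      _ = Real.exp (-l * (Real.sqrt n * ε) + (l * (Real.sqrt n * (c/2))
          + (n:ℝ) * (l ^ 2 * c ^ 2 / 8))) := by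
          rw [Real.exp_add, Real.exp_add]
      _ = Real.exp (-(ε - c / 2) ^ 2 / (c ^ 2 / 2)) := by
          congr 1
          set s : ℝ := Real.sqrt n with hsdef
          have hn2 : (n:ℝ) = s ^ 2 := (Real.sq_sqrt (Nat.cast_nonneg n)).symm
          have hs0 : s ≠ 0 := ne_of_gt hs
          have hc0 : c ≠ 0 := ne_of_gt hc
          rw [hn2, hl]
          field_simp
          ring
  calc (P {ω | Real.sqrt n * ε < ‖∑ t, H t ω‖}).toReal
      ≤ (P {ω | Real.sqrt n * ε ≤ X' ω}).toReal := hstep0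
    _ ≤ Real.exp (-l * (Real.sqrt n * ε)) * mgf X' P l := hstep1
    _ ≤ Real.exp (-l * (Real.sqrt n * ε))
        * (Real.exp (l * m) * Real.exp ((n:ℝ) * (l ^ 2 * c ^ 2 / 8))) :=
        mul_le_mul_of_nonneg_left hstep2 (Real.exp_pos _).le
    _ ≤ Real.exp (-(ε - c / 2) ^ 2 / (c ^ 2 / 2)) := hfinal
end
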